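/- arXiv:2307.11059 — 2 statements merged into one kernel-verified Lean document; each statement's English description precedes it below -/
import Mathlib

section
/- Let A, B : I^n → I be standardized functions with A ≤ B and fix an integer k with 1 ≤ k ≤ n. Suppose at least one of A and B satisfies Condition S with some countable set S ⊆ [0,1], and that L_k^{(A,B)}(DU) ≥ 0 for all DU ∈ R_k(I^n). Then the following are equivalent: (i) P⁻_k^{(A,B)}(x) ≥ B(x) − A(x) for all x ∈ I^n; (ii) for all x ∈ I^n, B(x) = sup{C(x) : C : I^n → I, A ≤ C ≤ B, C a k-increasing standardized function}. -/
open scoped Classical BigOperators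

namespace KIncr

/-- Points of the ambient space `ℝ^n`. -/
abbrev Pt (n : ℕ) := Fin n → ℝ

/-- Membership in the unit cube `I^n = [0,1]^n`. -/
def inCube {n : ℕ} (x : Pt n) : Prop := ∀ i, x i ∈ Set.Icc (0:ℝ) 1

/-- The unit cube as a set. -/
def cubeSet (n : ℕ) : Set (Pt n) := {x | inCube x}

/-- Vertices of the unit cube `I^n`. -/
def isCubeVertex {n : ℕ} (x : Pt n) : Prop := ∀ i, x i = 0 ∨ x i = 1

/-- A (formal) box, given by its lower-left and upper-right corners. -/
structure Box (n : ℕ) where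
  lo : Pt n
  hi : Pt n

/-- `R` is a `k`-box in `I^n`: exactly `k` coordinates are nondegenerate. -/
def Box.IsKBox {n : ℕ} (k : ℕ) (R : Box n) : Prop :=
  inCube R.lo ∧ inCube R.hi ∧ (∀ i, R.lo i ≤ R.hi i) ∧
    (Finset.univ.filter (fun i => R.lo i < R.hi i)).card = k

/-- `v` is a vertex of the box `R`. -/
def Box.IsVertex {n : ℕ} (R : Box n) (v : Pt n) : Prop :=
  ∀ i, v i = R.lo i ∨ v i = R.hi i

/-- The (finite) set of vertices of a box. -/
noncomputable def Box.vertices {n : ℕ} (R : Box n) : Finset (Pt n) :=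
  Finset.image (fun ε : Fin n → Bool => fun i => if ε i then R.hi i else R.lo i)
    Finset.univ

/-- The sign `(-1)^(m-(n-k))` of a vertex `v` of a `k`-box, where
`m = #{i : v i = lo i}`;  since `m ≥ n - k`, this equals `(-1)^(m+(n-k))`. -/
noncomputable def Box.sign {n : ℕ} (k : ℕ) (R : Box n) (v : Pt n) : ℤ :=
  (-1) ^ ((Finset.univ.filter (fun i => v i = R.lo i)).card + (n - k))

/-- The multiplicity `m_R(u)` of a point `u` with respect to a `k`-box `R`. -/
noncomputable def Box.mult {n : ℕ} (k : ℕ) (R : Box n) (u : Pt n) : ℤ :=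
  if R.IsVertex u then R.sign k u else 0

/-- `V_{A,k}(R) = ∑_{v ∈ ver R} sign_R(v) · A(v)`. -/
noncomputable def Vvol {n : ℕ} (k : ℕ) (A : Pt n → ℝ) (R : Box n) : ℝ :=
  ∑ v ∈ R.vertices, (R.sign k v : ℝ) * A v

/-- A function is `k`-increasing on `D` if `V_{A,k}(R) ≥ 0` for every `k`-box
with all vertices in `D`. -/
def KIncreasingOn {n : ℕ} (k : ℕ) (D : Set (Pt n)) (A : Pt n → ℝ) : Prop :=
  ∀ R : Box n, R.IsKBox k → (∀ v ∈ R.vertices, v ∈ D) → 0 ≤ Vvol k A R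

/-- The multiplicity `m_DU(u)` of a point with respect to a formal (multiset)
disjoint union of `k`-boxes. -/
noncomputable def multDU {n : ℕ} (k : ℕ) (DU : Multiset (Box n)) (u : Pt n) : ℤ :=
  (DU.map (fun R => R.mult k u)).sum

/-- `DU ∈ R_k(D)`: every box of the multiset `DU` is a `k`-box with all its
vertices in `D`. -/
def memRk {n : ℕ} (k : ℕ) (D : Set (Pt n)) (DU : Multiset (Box n)) : Prop :=
  ∀ R ∈ DU, R.IsKBox k ∧ ∀ v ∈ R.vertices, v ∈ D

/-- `L_k^{(A,B)}(DU) = ∑_{m_DU(u)>0} m_DU(u)·B(u) + ∑_{m_DU(u)<0} m_DU(u)·A(u)`. -/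
noncomputable def Lk {n : ℕ} (k : ℕ) (A B : Pt n → ℝ) (DU : Multiset (Box n)) : ℝ :=
  ∑ u ∈ DU.toFinset.biUnion Box.vertices,
    (if 0 < multDU k DU u then (multDU k DU u : ℝ) * B u
     else if multDU k DU u < 0 then (multDU k DU u : ℝ) * A u else 0)

/-- `P⁻_{k,D}^{(A,B)}(x)`, with the Mathlib convention `sInf ∅ = 0`. -/
noncomputable def Pneg {n : ℕ} (k : ℕ) (D : Set (Pt n)) (A B : Pt n → ℝ) (x : Pt n) : ℝ :=
  sInf {r : ℝ | ∃ DU : Multiset (Box n), memRk k D DU ∧ multDU k DU x < 0 ∧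
    r = Lk k A B DU / |(multDU k DU x : ℝ)|}

/-- `P⁺_{k,D}^{(A,B)}(x)`, with the Mathlib convention `sInf ∅ = 0`. -/
noncomputable def Ppos {n : ℕ} (k : ℕ) (D : Set (Pt n)) (A B : Pt n → ℝ) (x : Pt n) : ℝ :=
  sInf {r : ℝ | ∃ DU : Multiset (Box n), memRk k D DU ∧ 0 < multDU k DU x ∧
    r = Lk k A B DU / |(multDU k DU x : ℝ)|}

/-- `γ_{k,D}^{(A,B)}(x) = min {P⁻_{k,D}^{(A,B)}(x), B(x) - A(x)}`. -/
noncomputable def gammaK {n : ℕ} (k : ℕ) (D : Set (Pt n)) (A B : Pt n → ℝ) (x : Pt n) : ℝ :=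
  min (Pneg k D A B x) (B x - A x)

/-- `δ_{k,D}^{(A,B)}(x) = min {P⁺_{k,D}^{(A,B)}(x), B(x) - A(x)}`. -/
noncomputable def deltaK {n : ℕ} (k : ℕ) (D : Set (Pt n)) (A B : Pt n → ℝ) (x : Pt n) : ℝ :=
  min (Ppos k D A B x) (B x - A x)

/-- A dense countably infinite mesh `D = ∏ δᵢ` in `I^n`. -/
def IsMesh {n : ℕ} (D : Set (Pt n)) : Prop :=
  ∃ δ : Fin n → Set ℝ,
    (∀ i, δ i ⊆ Set.Icc (0:ℝ) 1 ∧ (δ i).Countable ∧ (δ i).Infinite ∧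
      Set.Icc (0:ℝ) 1 ⊆ closure (δ i) ∧ (0:ℝ) ∈ δ i ∧ (1:ℝ) ∈ δ i) ∧
    D = {x : Pt n | ∀ i, x i ∈ δ i}

/-- `A` is grounded: it vanishes whenever some coordinate is `0`. -/
def Grounded {n : ℕ} (A : Pt n → ℝ) : Prop :=
  ∀ x : Pt n, inCube x → (∃ i, x i = 0) → A x = 0

/-- `A` is 1-increasing (increasing in each variable). -/
def OneIncreasing {n : ℕ} (A : Pt n → ℝ) : Prop :=
  ∀ x y : Pt n, inCube x → inCube y → (∀ i, x i ≤ y i) → A x ≤ A y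

/-- `A` has uniform marginals. -/
def UniformMarginals {n : ℕ} (A : Pt n → ℝ) : Prop :=
  ∀ i : Fin n, ∀ t ∈ Set.Icc (0:ℝ) 1, A (Function.update (fun _ => (1:ℝ)) i t) = t

/-- `A` is a standardized function. -/
def Standardized {n : ℕ} (A : Pt n → ℝ) : Prop :=
  Grounded A ∧ OneIncreasing A ∧ A (fun _ => (1:ℝ)) = 1

/-- `A` is a semicopula. -/
def Semicopula {n : ℕ} (A : Pt n → ℝ) : Prop :=
  Grounded A ∧ OneIncreasing A ∧ UniformMarginals A

/-- `A` maps the unit cube into `I = [0,1]`. -/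
def MapsToI {n : ℕ} (A : Pt n → ℝ) : Prop :=
  ∀ x : Pt n, inCube x → A x ∈ Set.Icc (0:ℝ) 1

/-- Condition S: all discontinuities of all sections of `A` lie in the
countable set `S`. -/
def CondS {n : ℕ} (A : Pt n → ℝ) (S : Set ℝ) : Prop :=
  ∀ u : Pt n, inCube u → ∀ i : Fin n, ∀ t ∈ Set.Icc (0:ℝ) 1, t ∉ S →
    ContinuousWithinAt (fun s => A (Function.update u i s)) (Set.Icc (0:ℝ) 1) t

/-- A quasi-copula: a semicopula that is 1-Lipschitz w.r.t. the ℓ¹-norm. -/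
def QuasiCopula {n : ℕ} (A : Pt n → ℝ) : Prop :=
  Semicopula A ∧ ∀ x y : Pt n, inCube x → inCube y → |A x - A y| ≤ ∑ i, |x i - y i|

end KIncr


/-- Sum of a dite over all of a fintype equals sum over the subtype. -/
theorem dsum {ι : Type*} [Fintype ι] (P : ι → Prop) [DecidablePred P]
    (f : Subtype P → ℝ) :
    ∑ z : Subtype P, f z = ∑ i : ι, (if h : P i then f ⟨i, h⟩ else 0) := by
  classical
  have h1 : ∑ z : Subtype P, f z
      = ∑ z : Subtype P, (if h : P z.1 then f ⟨z.1, h⟩ else 0) := by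
    apply Finset.sum_congr rfl
    intro z _
    rw [dif_pos z.2]
  rw [h1]
  rw [← Finset.sum_subtype (Finset.univ.filter P)
    (by intro x; simp) (fun i => if h : P i then f ⟨i, h⟩ else 0)]
  apply Finset.sum_subset (Finset.filter_subset _ _)
  intro x _ hx
  rw [dif_neg]
  intro hP
  exact hx (by simpa using hP)

theorem farkas : ∀ (d : ℕ) {ι : Type} [Fintype ι] (r : ι → Fin d → ℝ) (b : ι → ℝ),
    (∀ y : ι → ℝ, (∀ i, 0 ≤ y i) → (∀ v, (∑ i, y i * r i v) = 0) → (∑ i, y i * b i) ≤ 0) →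
    ∃ c : Fin d → ℝ, ∀ i, b i ≤ ∑ v, r i v * c v := by
  intro d
  induction d with
  | zero =>
    intro ι _ r b h
    refine ⟨fun _ => 0, fun i => ?_⟩
    have h1 := h (fun j => if j = i then 1 else 0)
      (fun j => by show (0:ℝ) ≤ (if j = i then (1:ℝ) else 0); split <;> norm_num)
      (fun v => v.elim0)
    simp only [ite_mul, one_mul, zero_mul, Finset.sum_ite_eq', Finset.mem_univ, if_pos] at h1
    simpa using h1
  | succ d ih =>
    intro ι _ r b h
    classical
    set β : ι → ℝ := fun i => r i (Fin.last d) with hβ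
    let ιz := {i : ι // β i = 0}
    let ιp := {i : ι // 0 < β i}
    let ιn := {i : ι // β i < 0}
    let r' : ιz ⊕ ιp × ιn → Fin d → ℝ := fun j v =>
      match j with
      | .inl z => r z.1 v.castSucc
      | .inr (p, q) => (-β q.1) * r p.1 v.castSucc + β p.1 * r q.1 v.castSucc
    let b' : ιz ⊕ ιp × ιn → ℝ := fun j =>
      match j with
      | .inl z => b z.1
      | .inr (p, q) => (-β q.1) * b p.1 + β p.1 * b q.1
    have key : ∃ c : Fin d → ℝ, ∀ j, b' j ≤ ∑ v, r' j v * c v := by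
      apply ih r' b'
      intro y' hy' hcol
      set Y1 : ι → ℝ := fun i => if h : β i = 0 then y' (.inl ⟨i, h⟩) else 0 with hY1
      set Y2 : ι → ℝ := fun i =>
        if h : 0 < β i then ∑ q : ιn, y' (.inr (⟨i, h⟩, q)) * (-β q.1) else 0 with hY2
      set Y3 : ι → ℝ := fun i =>
        if h : β i < 0 then ∑ p : ιp, y' (.inr (p, ⟨i, h⟩)) * β p.1 else 0 with hY3
      set y : ι → ℝ := fun i => Y1 i + Y2 i + Y3 i with hy
      have hynn : ∀ i, 0 ≤ y i := by
        intro i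
        have h1 : 0 ≤ Y1 i := by
          rw [hY1]; dsimp only; split
          · exact hy' _
          · exact le_rfl
        have h2 : 0 ≤ Y2 i := by
          rw [hY2]; dsimp only; split
          · refine Finset.sum_nonneg fun q _ => mul_nonneg (hy' _) ?_
            have := q.2; linarith
          · exact le_rfl
        have h3 : 0 ≤ Y3 i := by
          rw [hY3]; dsimp only; split
          · refine Finset.sum_nonneg fun p _ => mul_nonneg (hy' _) ?_
            have := p.2; linarith
          · exact le_rfl
        simp only [hy]; linarith
      have expand : ∀ g : ι → ℝ, (∑ i, y i * g i)
          = (∑ z : ιz, y' (.inl z) * g z.1)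
            + ∑ p : ιp, ∑ q : ιn,
                y' (.inr (p, q)) * ((-β q.1) * g p.1 + β p.1 * g q.1) := by
        intro g
        have e1 : ∑ i, Y1 i * g i = ∑ z : ιz, y' (.inl z) * g z.1 := by
          rw [dsum (P := fun i => β i = 0) (f := fun z => y' (.inl z) * g z.1)]
          apply Finset.sum_congr rfl
          intro i _
          by_cases hc : β i = 0
          · simp only [hY1, dif_pos hc]
          · simp only [hY1, dif_neg hc, zero_mul]
        have e2 : ∑ i, Y2 i * g i
            = ∑ p : ιp, ∑ q : ιn, y' (.inr (p, q)) * ((-β q.1) * g p.1) := by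
          rw [dsum (P := fun i => 0 < β i)
            (f := fun p => ∑ q : ιn, y' (.inr (p, q)) * ((-β q.1) * g p.1))]
          apply Finset.sum_congr rfl
          intro i _
          by_cases hc : 0 < β i
          · simp only [hY2, dif_pos hc, Finset.sum_mul, mul_assoc]
          · simp only [hY2, dif_neg hc, zero_mul]
        have e3 : ∑ i, Y3 i * g i
            = ∑ p : ιp, ∑ q : ιn, y' (.inr (p, q)) * (β p.1 * g q.1) := by
          rw [Finset.sum_comm]
          rw [dsum (P := fun i => β i < 0)
            (f := fun q => ∑ p : ιp, y' (.inr (p, q)) * (β p.1 * g q.1))]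
          apply Finset.sum_congr rfl
          intro i _
          by_cases hc : β i < 0
          · simp only [hY3, dif_pos hc, Finset.sum_mul, mul_assoc]
          · simp only [hY3, dif_neg hc, zero_mul]
        have : ∑ i, y i * g i = ∑ i, Y1 i * g i + (∑ i, Y2 i * g i + ∑ i, Y3 i * g i) := by
          rw [← Finset.sum_add_distrib, ← Finset.sum_add_distrib]
          apply Finset.sum_congr rfl
          intro i _
          simp only [hy]; ring
        rw [this, e1, e2, e3, ← Finset.sum_add_distrib]
        congr 1
        apply Finset.sum_congr rfl
        intro p _
        rw [← Finset.sum_add_distrib]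
        apply Finset.sum_congr rfl
        intro q _
        ring
      have hcolnew : ∀ v : Fin (d + 1), (∑ i, y i * r i v) = 0 := by
        intro v
        induction v using Fin.lastCases with
        | last =>
          rw [expand (fun i => r i (Fin.last d))]
          have z0 : ∀ z : ιz, y' (.inl z) * r z.1 (Fin.last d) = 0 := by
            intro z
            have := z.2
            simp only [hβ] at this
            rw [this, mul_zero]
          have e0 : (∑ z : ιz, y' (.inl z) * r z.1 (Fin.last d)) = 0 :=
            Finset.sum_eq_zero fun z _ => z0 z
          have e1 : (∑ p : ιp, ∑ q : ιn,
              y' (.inr (p, q)) * ((-β q.1) * r p.1 (Fin.last d)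
                + β p.1 * r q.1 (Fin.last d))) = 0 := by
            apply Finset.sum_eq_zero
            intro p _
            apply Finset.sum_eq_zero
            intro q _
            have hh : (-β q.1) * r p.1 (Fin.last d) + β p.1 * r q.1 (Fin.last d) = 0 := by
              simp only [hβ]; ring
            rw [hh, mul_zero]
          rw [e0, e1, add_zero]
        | cast w =>
          rw [expand (fun i => r i w.castSucc)]
          have := hcol w
          rw [Fintype.sum_sum_type, Fintype.sum_prod_type] at this
          exact this
      have := h y hynn hcolnew
      rw [expand b] at this
      rw [Fintype.sum_sum_type, Fintype.sum_prod_type]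
      exact this
    obtain ⟨c', hc'⟩ := key
    set g : ι → ℝ := fun i => b i - ∑ w, r i w.castSucc * c' w with hg
    have hz : ∀ i, (hi : β i = 0) → g i ≤ 0 := by
      intro i hi
      have := hc' (.inl ⟨i, hi⟩)
      simp only [hg]
      simp only [r', b'] at this
      linarith
    have hKey : ∀ (p : ιp) (q : ιn), (-β q.1) * g p.1 + β p.1 * g q.1 ≤ 0 := by
      intro p q
      have hcomb := hc' (.inr (p, q))
      simp only [r', b'] at hcomb
      have hsum : ∑ v : Fin d, ((-β q.1) * r p.1 v.castSucc + β p.1 * r q.1 v.castSucc) * c' v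
          = (-β q.1) * (∑ w, r p.1 w.castSucc * c' w)
            + β p.1 * (∑ w, r q.1 w.castSucc * c' w) := by
        rw [Finset.mul_sum, Finset.mul_sum, ← Finset.sum_add_distrib]
        apply Finset.sum_congr rfl
        intro v _
        ring
      rw [hsum] at hcomb
      simp only [hg]
      nlinarith [hcomb]
    have main : ∃ t : ℝ, (∀ p : ιp, g p.1 / β p.1 ≤ t) ∧ (∀ q : ιn, t ≤ g q.1 / β q.1) := by
      by_cases hP : Nonempty ιp
      · have hPfin : (Finset.univ : Finset ιp).Nonempty := Finset.univ_nonempty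
        refine ⟨Finset.univ.sup' hPfin (fun p : ιp => g p.1 / β p.1),
          fun p => Finset.le_sup' (fun p : ιp => g p.1 / β p.1) (Finset.mem_univ p), ?_⟩
        intro q
        apply Finset.sup'_le
        intro p _
        have hp := p.2
        have hq := q.2
        rw [div_le_iff₀ hp, div_mul_eq_mul_div, le_div_iff_of_neg hq]
        nlinarith [hKey p q]
      · by_cases hN : Nonempty ιn
        · have hNfin : (Finset.univ : Finset ιn).Nonempty := Finset.univ_nonempty
          exact ⟨Finset.univ.inf' hNfin (fun q : ιn => g q.1 / β q.1),
            fun p => absurd ⟨p⟩ hP, fun q => Finset.inf'_le (fun q : ιn => g q.1 / β q.1) (Finset.mem_univ q)⟩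
        · exact ⟨0, fun p => absurd ⟨p⟩ hP, fun q => absurd ⟨q⟩ hN⟩
    obtain ⟨t, hlow, hupp⟩ := main
    refine ⟨(Fin.snoc c' t : Fin (d+1) → ℝ), ?_⟩
    intro i
    have hsumc : ∑ v : Fin (d + 1), r i v * (Fin.snoc c' t : Fin (d+1) → ℝ) v
        = (∑ w : Fin d, r i w.castSucc * c' w) + β i * t := by
      rw [Fin.sum_univ_castSucc]
      simp only [Fin.snoc_castSucc, Fin.snoc_last, hβ]
    rw [hsumc]
    have hgoal : g i ≤ β i * t := by
      rcases lt_trichotomy (β i) 0 with hneg | hzero | hpos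
      · have := hupp ⟨i, hneg⟩
        rw [le_div_iff_of_neg' hneg] at this
        exact this
      · rw [hzero, zero_mul]
        exact hz i hzero
      · have := hlow ⟨i, hpos⟩
        rw [div_le_iff₀ hpos] at this
        linarith [this]
    simp only [hg] at hgoal
    linarith [hgoal]

namespace KIncr

variable {n : ℕ}

theorem Box.mem_vertices_iff (R : Box n) (v : Pt n) :
    v ∈ R.vertices ↔ R.IsVertex v := by
  classical
  constructor
  · intro hv
    rw [Box.vertices, Finset.mem_image] at hv
    obtain ⟨ε, -, rfl⟩ := hv
    intro i
    by_cases h : ε i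
    · simp [h]
    · simp [h]
  · intro hv
    rw [Box.vertices, Finset.mem_image]
    refine ⟨fun i => if v i = R.hi i then true else false, Finset.mem_univ _, ?_⟩
    funext i
    by_cases h : v i = R.hi i
    · simp [h]
    · simp only [h, if_false]
      rcases hv i with h1 | h1
      · exact h1.symm
      · exact absurd h1 h

theorem Box.sign_eq_or (k : ℕ) (R : Box n) (v : Pt n) :
    R.sign k v = 1 ∨ R.sign k v = -1 := by
  rw [Box.sign]
  rcases Nat.even_or_odd ((Finset.univ.filter (fun i => v i = R.lo i)).card + (n - k)) with h | h
  · left; exact h.neg_one_pow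
  · right; exact h.neg_one_pow

theorem Box.mult_cases (k : ℕ) (R : Box n) (u : Pt n) :
    R.mult k u = 0 ∨ R.mult k u = 1 ∨ R.mult k u = -1 := by
  rw [Box.mult]
  split
  · right; exact R.sign_eq_or k u
  · left; rfl

theorem Box.abs_mult_le_one (k : ℕ) (R : Box n) (u : Pt n) :
    |R.mult k u| ≤ 1 := by
  rcases R.mult_cases k u with h | h | h <;> rw [h] <;> norm_num

theorem Box.mult_eq_zero_of_not_vertex {k : ℕ} {R : Box n} {u : Pt n}
    (h : u ∉ R.vertices) : R.mult k u = 0 := by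
  rw [Box.mult, if_neg]
  intro hv
  exact h ((R.mem_vertices_iff u).2 hv)

theorem Box.mult_eq_sign_of_vertex {k : ℕ} {R : Box n} {u : Pt n}
    (h : u ∈ R.vertices) : R.mult k u = R.sign k u := by
  rw [Box.mult, if_pos ((R.mem_vertices_iff u).1 h)]

theorem Box.vertex_inCube {k : ℕ} {R : Box n} (hR : R.IsKBox k) {v : Pt n}
    (hv : v ∈ R.vertices) : inCube v := by
  intro i
  rcases (R.mem_vertices_iff v).1 hv i with h | h
  · rw [h]; exact hR.1 i
  · rw [h]; exact hR.2.1 i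

theorem multDU_add (k : ℕ) (D1 D2 : Multiset (Box n)) (u : Pt n) :
    multDU k (D1 + D2) u = multDU k D1 u + multDU k D2 u := by
  simp [multDU, Multiset.map_add]

theorem multDU_nsmul (k : ℕ) (c : ℕ) (D : Multiset (Box n)) (u : Pt n) :
    multDU k (c • D) u = (c : ℤ) * multDU k D u := by
  induction c with
  | zero => simp [multDU]
  | succ m ih =>
    rw [succ_nsmul, multDU_add, ih]
    push_cast
    ring

theorem multDU_singleton (k : ℕ) (R : Box n) (u : Pt n) :
    multDU k ({R} : Multiset (Box n)) u = R.mult k u := by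
  simp [multDU]

theorem multDU_finsum {α : Type*} (k : ℕ) (s : Finset α) (f : α → Multiset (Box n))
    (u : Pt n) :
    multDU k (∑ a ∈ s, f a) u = ∑ a ∈ s, multDU k (f a) u := by
  classical
  induction s using Finset.induction_on with
  | empty => simp [multDU]
  | insert _ _ hnotmem ih =>
    rw [Finset.sum_insert hnotmem, Finset.sum_insert hnotmem, multDU_add, ih]

theorem multDU_eq_zero_of_not_mem {k : ℕ} {DU : Multiset (Box n)} {u : Pt n}
    (h : u ∉ DU.toFinset.biUnion Box.vertices) : multDU k DU u = 0 := by
  rw [multDU]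
  apply Multiset.sum_eq_zero
  intro z hz
  rw [Multiset.mem_map] at hz
  obtain ⟨R, hR, rfl⟩ := hz
  apply Box.mult_eq_zero_of_not_vertex
  intro hv
  exact h (Finset.mem_biUnion.2 ⟨R, Multiset.mem_toFinset.2 hR, hv⟩)

theorem Lk_eq_sum_superset {k : ℕ} {A B : Pt n → ℝ} {DU : Multiset (Box n)}
    {U : Finset (Pt n)} (hU : DU.toFinset.biUnion Box.vertices ⊆ U) :
    Lk k A B DU = ∑ u ∈ U,
      (if 0 < multDU k DU u then (multDU k DU u : ℝ) * B u
       else if multDU k DU u < 0 then (multDU k DU u : ℝ) * A u else 0) := by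
  rw [Lk]
  apply Finset.sum_subset hU
  intro x _ hx
  rw [multDU_eq_zero_of_not_mem hx]
  norm_num

theorem sum_mult_mul_eq_Vvol {k : ℕ} {R : Box n} {U : Finset (Pt n)}
    (hU : R.vertices ⊆ U) (C : Pt n → ℝ) :
    ∑ u ∈ U, (R.mult k u : ℝ) * C u = Vvol k C R := by
  rw [Vvol]
  rw [← Finset.sum_subset hU (fun x _ hx => by
    rw [Box.mult_eq_zero_of_not_vertex hx]; norm_num)]
  apply Finset.sum_congr rfl
  intro v hv
  rw [Box.mult_eq_sign_of_vertex hv]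

end KIncr

namespace KIncr

variable {n : ℕ}

/-- Auxiliary box through `x`: coordinate `i₀` spans `[x i₀, c]`, coordinates in `T`
span `[0, x j]`, all other coordinates are degenerate at `x`. -/
noncomputable def mkBox (x : Pt n) (c : ℝ) (i₀ : Fin n) (T : Finset (Fin n)) : Box n where
  lo := fun i => if i ∈ T then 0 else x i
  hi := fun i => if i = i₀ then c else x i

/-- The top vertex of `mkBox`. -/
noncomputable def mkTop (x : Pt n) (c : ℝ) (i₀ : Fin n) : Pt n :=
  fun i => if i = i₀ then c else x i

section MkBox

variable {k : ℕ} {x : Pt n} {c : ℝ} {i₀ : Fin n} {T : Finset (Fin n)}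

theorem mkBox_isKBox (hx : inCube x) (hi₀ : i₀ ∉ T) (hc1 : x i₀ < c) (hc2 : c ≤ 1)
    (hT : ∀ j ∈ T, 0 < x j) (hcard : T.card = k - 1) (hk : 1 ≤ k) (hkn : k ≤ n) :
    (mkBox x c i₀ T).IsKBox k := by
  have hc0 : 0 ≤ c := le_trans (hx i₀).1 (le_of_lt hc1)
  refine ⟨?_, ?_, ?_, ?_⟩
  · intro i
    dsimp only [mkBox]
    split
    · exact ⟨le_refl 0, zero_le_one⟩
    · exact hx i
  · intro i
    dsimp only [mkBox]
    split
    · exact ⟨hc0, hc2⟩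
    · exact hx i
  · intro i
    dsimp only [mkBox]
    by_cases h1 : i ∈ T
    · rw [if_pos h1]
      have hne : i ≠ i₀ := fun h => hi₀ (h ▸ h1)
      rw [if_neg hne]
      exact le_of_lt (hT i h1)
    · rw [if_neg h1]
      by_cases h2 : i = i₀
      · subst h2; rw [if_pos rfl]; exact le_of_lt hc1
      · rw [if_neg h2]
  · have hfil : Finset.univ.filter
        (fun i => (mkBox x c i₀ T).lo i < (mkBox x c i₀ T).hi i) = insert i₀ T := by
      ext i
      simp only [Finset.mem_filter, Finset.mem_univ, true_and, Finset.mem_insert]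
      dsimp only [mkBox]
      constructor
      · intro hlt
        by_contra hcon
        push_neg at hcon
        rw [if_neg hcon.2, if_neg hcon.1] at hlt
        exact lt_irrefl _ hlt
      · rintro (rfl | hiT)
        · rw [if_neg hi₀, if_pos rfl]; exact hc1
        · have hne : i ≠ i₀ := fun h => hi₀ (h ▸ hiT)
          rw [if_pos hiT, if_neg hne]
          exact hT i hiT
    rw [hfil, Finset.card_insert_of_notMem hi₀, hcard]
    omega

theorem x_isVertex_mkBox (hi₀ : i₀ ∉ T) : (mkBox x c i₀ T).IsVertex x := by
  intro i
  dsimp only [mkBox]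
  by_cases h1 : i ∈ T
  · right
    have hne : i ≠ i₀ := fun h => hi₀ (h ▸ h1)
    rw [if_neg hne]
  · left
    rw [if_neg h1]

theorem top_isVertex_mkBox : (mkBox x c i₀ T).IsVertex (mkTop x c i₀) := by
  intro i
  dsimp only [mkBox, mkTop]
  by_cases h2 : i = i₀
  · right; simp [h2]
  · by_cases h1 : i ∈ T
    · right; simp [h2]
    · left; simp [h1, h2]

theorem sign_x_mkBox (hi₀ : i₀ ∉ T) (hc1 : x i₀ < c)
    (hT : ∀ j ∈ T, 0 < x j) (hcard : T.card = k - 1) (hk : 1 ≤ k) (hkn : k ≤ n) :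
    (mkBox x c i₀ T).sign k x = -1 := by
  have hfil : Finset.univ.filter (fun i => x i = (mkBox x c i₀ T).lo i)
      = Finset.univ \ T := by
    ext i
    simp only [Finset.mem_filter, Finset.mem_univ, true_and, Finset.mem_sdiff]
    dsimp only [mkBox]
    by_cases h1 : i ∈ T
    · rw [if_pos h1]
      simp only [h1, not_true_eq_false, and_false, iff_false]
      exact ne_of_gt (hT i h1)
    · rw [if_neg h1]
      simp [h1]
  rw [Box.sign, hfil, Finset.card_sdiff_of_subset (Finset.subset_univ T), Finset.card_univ,
    Fintype.card_fin, hcard]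
  have he : n - (k - 1) + (n - k) = 2 * (n - k) + 1 := by omega
  rw [he, pow_succ, pow_mul]
  norm_num

theorem sign_top_mkBox (hi₀ : i₀ ∉ T) (hc1 : x i₀ < c)
    (hT : ∀ j ∈ T, 0 < x j) (hcard : T.card = k - 1) (hk : 1 ≤ k) (hkn : k ≤ n) :
    (mkBox x c i₀ T).sign k (mkTop x c i₀) = 1 := by
  have hfil : Finset.univ.filter (fun i => mkTop x c i₀ i = (mkBox x c i₀ T).lo i)
      = Finset.univ \ insert i₀ T := by
    ext i
    simp only [Finset.mem_filter, Finset.mem_univ, true_and, Finset.mem_sdiff,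
      Finset.mem_insert]
    dsimp only [mkBox, mkTop]
    by_cases h2 : i = i₀
    · subst h2
      rw [if_pos rfl, if_neg hi₀]
      simp only [true_or, not_true_eq_false, and_false, iff_false]
      exact ne_of_gt hc1
    · rw [if_neg h2]
      by_cases h1 : i ∈ T
      · rw [if_pos h1]
        simp only [h1, or_true, not_true_eq_false, and_false, iff_false]
        exact ne_of_gt (hT i h1)
      · rw [if_neg h1]
        simp [h1, h2]
  rw [Box.sign, hfil, Finset.card_sdiff_of_subset (Finset.subset_univ _), Finset.card_univ,
    Fintype.card_fin, Finset.card_insert_of_notMem hi₀, hcard]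
  have he : n - (k - 1 + 1) + (n - k) = 2 * (n - k) := by omega
  rw [he, pow_mul]
  norm_num

theorem x_ne_top_mkBox (hc1 : x i₀ < c) : x ≠ mkTop x c i₀ := by
  intro h
  have := congrFun h i₀
  rw [mkTop, if_pos rfl] at this
  exact ne_of_lt hc1 this

theorem vertex_trichotomy_mkBox (hi₀ : i₀ ∉ T) {w : Pt n}
    (hw : (mkBox x c i₀ T).IsVertex w) :
    (∃ j ∈ T, w j = 0) ∨ w = x ∨ w = mkTop x c i₀ := by
  classical
  by_cases hz : ∃ j ∈ T, w j = 0
  · exact Or.inl hz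
  · push_neg at hz
    right
    have hwT : ∀ j ∈ T, w j = x j := by
      intro j hj
      have hne : j ≠ i₀ := fun h => hi₀ (h ▸ hj)
      rcases hw j with h | h
      · rw [mkBox] at h
        dsimp only at h
        rw [if_pos hj] at h
        exact absurd h (hz j hj)
      · rw [mkBox] at h
        dsimp only at h
        rwa [if_neg hne] at h
    have hwOther : ∀ j, j ∉ T → j ≠ i₀ → w j = x j := by
      intro j hj hne
      rcases hw j with h | h
      · rw [mkBox] at h; dsimp only at h; rwa [if_neg hj] at h
      · rw [mkBox] at h; dsimp only at h; rwa [if_neg hne] at h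
    rcases hw i₀ with h | h
    · left
      funext j
      by_cases hj : j ∈ T
      · exact hwT j hj
      · by_cases hne : j = i₀
        · subst hne
          rw [mkBox] at h; dsimp only at h; rwa [if_neg hj] at h
        · exact hwOther j hj hne
    · right
      funext j
      rw [mkTop]
      by_cases hne : j = i₀
      · subst hne
        rw [mkBox] at h; dsimp only at h
        rw [if_pos rfl] at h
        rw [if_pos rfl]
        exact h
      · rw [if_neg hne]
        by_cases hj : j ∈ T
        · exact hwT j hj
        · exact hwOther j hj hne

theorem Vvol_mkBox (hx : inCube x) (hi₀ : i₀ ∉ T) (hc1 : x i₀ < c) (hc2 : c ≤ 1)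
    (hT : ∀ j ∈ T, 0 < x j) (hcard : T.card = k - 1) (hk : 1 ≤ k) (hkn : k ≤ n)
    (C : Pt n → ℝ) (hC0 : ∀ w, inCube w → (∃ j, w j = 0) → C w = 0) :
    Vvol k C (mkBox x c i₀ T) = C (mkTop x c i₀) - C x := by
  classical
  have hKB := mkBox_isKBox hx hi₀ hc1 hc2 hT hcard hk hkn
  have hxv : x ∈ (mkBox x c i₀ T).vertices :=
    ((mkBox x c i₀ T).mem_vertices_iff x).2 (x_isVertex_mkBox hi₀)
  have htv : mkTop x c i₀ ∈ (mkBox x c i₀ T).vertices :=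
    ((mkBox x c i₀ T).mem_vertices_iff _).2 top_isVertex_mkBox
  have hne := x_ne_top_mkBox hc1
  have hsub : ({x, mkTop x c i₀} : Finset (Pt n)) ⊆ (mkBox x c i₀ T).vertices := by
    intro w hw
    rcases Finset.mem_insert.1 hw with rfl | hw
    · exact hxv
    · rw [Finset.mem_singleton] at hw
      subst hw
      exact htv
  rw [Vvol]
  rw [← Finset.sum_subset hsub (fun w hw hwn => ?_)]
  · rw [Finset.sum_pair hne,
      sign_x_mkBox hi₀ hc1 hT hcard hk hkn,
      sign_top_mkBox hi₀ hc1 hT hcard hk hkn]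
    push_cast
    ring
  · rcases vertex_trichotomy_mkBox hi₀ (((mkBox x c i₀ T).mem_vertices_iff w).1 hw)
        with hcase | hcase | hcase
    · obtain ⟨j, hjT, hj0⟩ := hcase
      rw [hC0 w (Box.vertex_inCube hKB hw) ⟨j, hj0⟩, mul_zero]
    · exact absurd (by rw [hcase]; exact Finset.mem_insert_self _ _) hwn
    · exact absurd (by rw [hcase]; exact
        Finset.mem_insert_of_mem (Finset.mem_singleton_self _)) hwn

end MkBox

/-- Existence of a `DU` with multiplicity `-1` at a strictly positive point
that is below `1` in some coordinate. -/
theorem exists_neg_DU {k : ℕ} (hk : 1 ≤ k) (hkn : k ≤ n) {x : Pt n} (hx : inCube x)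
    (hpos : ∀ i, 0 < x i) {i₀ : Fin n} (hi₀ : x i₀ < 1) :
    ∃ DU : Multiset (Box n), memRk k (cubeSet n) DU ∧ multDU k DU x = -1 := by
  classical
  have hn1 : 1 ≤ n := le_trans hk hkn
  obtain ⟨T, hTsub, hTcard⟩ := Finset.exists_subset_card_eq
    (s := Finset.univ.erase i₀) (n := k - 1) (by
      rw [Finset.card_erase_of_mem (Finset.mem_univ i₀), Finset.card_univ, Fintype.card_fin]
      omega)
  have hi₀T : i₀ ∉ T := fun h => (Finset.mem_erase.1 (hTsub h)).1 rfl
  have hT : ∀ j ∈ T, 0 < x j := fun j _ => hpos j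
  have hKB := mkBox_isKBox (k := k) hx hi₀T hi₀ le_rfl hT hTcard hk hkn
  refine ⟨{mkBox x 1 i₀ T}, ?_, ?_⟩
  · intro R hR
    rw [Multiset.mem_singleton] at hR
    subst hR
    exact ⟨hKB, fun v hv => Box.vertex_inCube hKB hv⟩
  · rw [multDU_singleton,
      Box.mult_eq_sign_of_vertex (((mkBox x 1 i₀ T).mem_vertices_iff x).2
        (x_isVertex_mkBox hi₀T))]
    exact sign_x_mkBox hi₀T hi₀ hT hTcard hk hkn

/-- Any function that vanishes on the zero-faces and is `k`-increasing on the cube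
is increasing in each variable. -/
theorem oneIncreasing_of_kIncreasing {k : ℕ} (hk : 1 ≤ k) (hkn : k ≤ n) (C : Pt n → ℝ)
    (hC0 : ∀ w, inCube w → (∃ j, w j = 0) → C w = 0)
    (hK : KIncreasingOn k (cubeSet n) C) : OneIncreasing C := by
  classical
  have step : ∀ (i₁ : Fin n) (u v : Pt n), inCube u → inCube v → (∀ j, u j ≤ v j) →
      (∀ j, j ≠ i₁ → u j = v j) → C u ≤ C v := by
    intro i₁ u v hu hv hle heq
    by_cases hlt : u i₁ = v i₁
    · have : u = v := by
        funext j
        by_cases hj : j = i₁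
        · subst hj; exact hlt
        · exact heq j hj
      rw [this]
    have hlt' : u i₁ < v i₁ := lt_of_le_of_ne (hle i₁) hlt
    by_cases hz : ∃ j, j ≠ i₁ ∧ u j = 0
    · obtain ⟨j, hjne, hj0⟩ := hz
      have hv0 : v j = 0 := (heq j hjne) ▸ hj0
      rw [hC0 u hu ⟨j, hj0⟩, hC0 v hv ⟨j, hv0⟩]
    · push_neg at hz
      obtain ⟨T, hTsub, hTcard⟩ := Finset.exists_subset_card_eq
        (s := Finset.univ.erase i₁) (n := k - 1) (by
          rw [Finset.card_erase_of_mem (Finset.mem_univ i₁), Finset.card_univ,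
            Fintype.card_fin]
          omega)
      have hi₁T : i₁ ∉ T := fun h => (Finset.mem_erase.1 (hTsub h)).1 rfl
      have hT : ∀ j ∈ T, 0 < u j := by
        intro j hj
        have hne : j ≠ i₁ := (Finset.mem_erase.1 (hTsub hj)).1
        exact lt_of_le_of_ne (hu j).1 (Ne.symm (hz j hne))
      have hKB := mkBox_isKBox (k := k) hu hi₁T hlt' (hv i₁).2 hT hTcard hk hkn
      have hVv := Vvol_mkBox hu hi₁T hlt' (hv i₁).2 hT hTcard hk hkn C hC0
      have htop : mkTop u (v i₁) i₁ = v := by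
        funext j
        rw [mkTop]
        by_cases hj : j = i₁
        · subst hj; rw [if_pos rfl]
        · rw [if_neg hj]; exact heq j hj
      have h0 := hK (mkBox u (v i₁) i₁ T) hKB
        (fun w hw => (Box.vertex_inCube hKB hw : inCube w))
      rw [hVv, htop] at h0
      linarith
  intro u v hu hv hle
  set mix : Finset (Fin n) → Pt n := fun s => fun j => if j ∈ s then v j else u j with hmix
  have hmixcube : ∀ s, inCube (mix s) := by
    intro s i
    rw [hmix]
    dsimp only
    split
    · exact hv i
    · exact hu i
  have hclaim : ∀ s : Finset (Fin n), C u ≤ C (mix s) := by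
    intro s
    induction s using Finset.induction_on with
    | empty =>
      have : mix ∅ = u := by
        funext j
        rw [hmix]
        simp
      rw [this]
    | @insert a s ha ih =>
      refine le_trans ih (step a (mix s) (mix (insert a s)) (hmixcube s)
        (hmixcube (insert a s)) ?_ ?_)
      · intro j
        rw [hmix]
        dsimp only
        by_cases hj : j ∈ s
        · rw [if_pos hj, if_pos (Finset.mem_insert_of_mem hj)]
        · rw [if_neg hj]
          by_cases hja : j = a
          · subst hja
            rw [if_pos (Finset.mem_insert_self _ _)]
            exact hle j
          · rw [if_neg (fun hh => (Finset.mem_insert.1 hh).elim hja hj)]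
      · intro j hja
        rw [hmix]
        dsimp only
        by_cases hj : j ∈ s
        · rw [if_pos hj, if_pos (Finset.mem_insert_of_mem hj)]
        · rw [if_neg hj, if_neg (fun hh => (Finset.mem_insert.1 hh).elim hja hj)]
  have hfin := hclaim Finset.univ
  have : mix Finset.univ = v := by
    funext j
    rw [hmix]
    simp
  rwa [this] at hfin

end KIncr

namespace KIncr

variable {n : ℕ}

/-- The "cost" function `f(m,u) = m·B(u)` for `m>0`, `m·A(u)` for `m<0`. -/
noncomputable def fRfun (A B : Pt n → ℝ) (m : ℝ) (v : Pt n) : ℝ :=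
  if 0 < m then m * B v else if m < 0 then m * A v else 0

theorem fRfun_int_cast (A B : Pt n → ℝ) (m : ℤ) (v : Pt n) :
    fRfun A B (m : ℝ) v
      = (if 0 < m then (m : ℝ) * B v else if m < 0 then (m : ℝ) * A v else 0) := by
  rw [fRfun]
  rcases lt_trichotomy m 0 with h | h | h
  · rw [if_neg (by exact_mod_cast not_lt.2 h.le), if_pos (by exact_mod_cast h),
      if_neg (by omega), if_pos h]
  · subst h; norm_num
  · rw [if_pos (by exact_mod_cast h), if_pos h]

theorem fRfun_eq_max {A B : Pt n → ℝ} {v : Pt n} (hAB : A v ≤ B v) (m : ℝ) :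
    fRfun A B m v = max (m * A v) (m * B v) := by
  rw [fRfun]
  rcases lt_trichotomy m 0 with h | h | h
  · rw [if_neg (by linarith), if_pos h, max_eq_left (by nlinarith)]
  · subst h; norm_num
  · rw [if_pos h, max_eq_right (by nlinarith)]

theorem fRfun_lip {A B : Pt n → ℝ} {v : Pt n} (h0 : 0 ≤ A v) (hAB : A v ≤ B v)
    (h1 : B v ≤ 1) (m m' : ℝ) :
    |fRfun A B m v - fRfun A B m' v| ≤ |m - m'| := by
  rw [fRfun_eq_max hAB, fRfun_eq_max hAB]
  refine le_trans (abs_max_sub_max_le_max _ _ _ _) ?_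
  have e1 : |m * A v - m' * A v| = |m - m'| * A v := by
    rw [← sub_mul, abs_mul, abs_of_nonneg h0]
  have e2 : |m * B v - m' * B v| = |m - m'| * B v := by
    rw [← sub_mul, abs_mul, abs_of_nonneg (le_trans h0 hAB)]
  rw [e1, e2]
  apply max_le
  · nlinarith [abs_nonneg (m - m')]
  · nlinarith [abs_nonneg (m - m')]

theorem fRfun_div (A B : Pt n → ℝ) (v : Pt n) (m c : ℝ) (hc : 0 < c) :
    fRfun A B (m / c) v = fRfun A B m v / c := by
  rw [fRfun, fRfun]
  rcases lt_trichotomy m 0 with h | h | h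
  · have hdiv : m / c < 0 := div_neg_of_neg_of_pos h hc
    rw [if_neg (by linarith), if_pos hdiv, if_neg (by linarith), if_pos h,
      div_mul_eq_mul_div]
  · subst h
    norm_num
  · rw [if_pos (div_pos h hc), if_pos h, div_mul_eq_mul_div]

/-- Key telescoping bound: for any `k`-increasing `C` between `A` and `B`. -/
theorem key_bound {k : ℕ} {A B C : Pt n → ℝ}
    (hK : KIncreasingOn k (cubeSet n) C)
    (hlow : ∀ u, inCube u → A u ≤ C u) (hhigh : ∀ u, inCube u → C u ≤ B u)
    {DU : Multiset (Box n)} (hDU : memRk k (cubeSet n) DU) {x : Pt n}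
    (hx : multDU k DU x < 0) :
    (C x - A x) * |(multDU k DU x : ℝ)| ≤ Lk k A B DU := by
  classical
  set U := DU.toFinset.biUnion Box.vertices with hU
  have hUcube : ∀ u ∈ U, inCube u := by
    intro u hu
    rw [hU, Finset.mem_biUnion] at hu
    obtain ⟨R, hR, hv⟩ := hu
    exact (hDU R (Multiset.mem_toFinset.1 hR)).2 u hv
  have hxU : x ∈ U := by
    by_contra h
    rw [multDU_eq_zero_of_not_mem h] at hx
    exact lt_irrefl 0 hx
  have swap : ∀ D : Multiset (Box n), (∀ R ∈ D, R.vertices ⊆ U) →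
      ∑ u ∈ U, (multDU k D u : ℝ) * C u = (D.map (fun R => Vvol k C R)).sum := by
    intro D
    induction D using Multiset.induction_on with
    | empty => intro _; simp [multDU]
    | @cons R D ih2 =>
      intro hs
      have h1 : ∀ u, multDU k (R ::ₘ D) u = R.mult k u + multDU k D u := by
        intro u
        simp [multDU, Multiset.map_cons, Multiset.sum_cons]
      have h2 : ∑ u ∈ U, (multDU k (R ::ₘ D) u : ℝ) * C u
          = (∑ u ∈ U, (R.mult k u : ℝ) * C u) + ∑ u ∈ U, (multDU k D u : ℝ) * C u := by
        rw [← Finset.sum_add_distrib]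
        apply Finset.sum_congr rfl
        intro u _
        rw [h1]
        push_cast
        ring
      rw [h2, Multiset.map_cons, Multiset.sum_cons,
        sum_mult_mul_eq_Vvol (hs R (Multiset.mem_cons_self R D)) C,
        ih2 (fun R' hR' => hs R' (Multiset.mem_cons_of_mem hR'))]
  have S1 : 0 ≤ ∑ u ∈ U, (multDU k DU u : ℝ) * C u := by
    rw [swap DU (fun R hR v hv => Finset.mem_biUnion.2 ⟨R, Multiset.mem_toFinset.2 hR, hv⟩)]
    apply Multiset.sum_nonneg
    intro z hz
    rw [Multiset.mem_map] at hz
    obtain ⟨R, hR, rfl⟩ := hz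
    exact hK R (hDU R hR).1 (hDU R hR).2
  have S2 : ∀ u ∈ U, (multDU k DU u : ℝ) * C u
      + (if u = x then (C x - A x) * |(multDU k DU x : ℝ)| else 0)
      ≤ (if 0 < multDU k DU u then (multDU k DU u : ℝ) * B u
         else if multDU k DU u < 0 then (multDU k DU u : ℝ) * A u else 0) := by
    intro u hu
    have hcube := hUcube u hu
    by_cases hux : u = x
    · subst hux
      rw [if_pos rfl, if_neg (by omega), if_pos hx]
      have habs : |(multDU k DU u : ℝ)| = -(multDU k DU u : ℝ) := by
        apply abs_of_neg
        exact_mod_cast hx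
      rw [habs]
      apply le_of_eq
      ring
    · rw [if_neg hux, add_zero]
      rcases lt_trichotomy (multDU k DU u) 0 with hm | hm | hm
      · rw [if_neg (by omega), if_pos hm]
        exact mul_le_mul_of_nonpos_left (hlow u hcube) (by exact_mod_cast hm.le)
      · rw [hm]
        norm_num
      · rw [if_pos hm]
        exact mul_le_mul_of_nonneg_left (hhigh u hcube) (by exact_mod_cast hm.le)
  have hLk := Lk_eq_sum_superset (A := A) (B := B) (k := k) (DU := DU) (U := U)
    (le_refl _)
  have hsum := Finset.sum_le_sum S2
  rw [Finset.sum_add_distrib, Finset.sum_ite_eq' U x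
    (fun _ => (C x - A x) * |(multDU k DU x : ℝ)|), if_pos hxU] at hsum
  rw [hLk]
  linarith

end KIncr

namespace KIncr

variable {n : ℕ}

/-- Ψ-nonnegativity for natural-number coefficient vectors, from `hL` and the
`P⁻` hypothesis at `x₀`. -/
theorem psi_int {k : ℕ} {A B : Pt n → ℝ}
    (hL : ∀ DU : Multiset (Box n), memRk k (cubeSet n) DU → 0 ≤ Lk k A B DU)
    {x₀ : Pt n}
    (hPneg : B x₀ - A x₀ ≤ Pneg k (cubeSet n) A B x₀)
    {G : Finset (Box n)} (hG : ∀ R ∈ G, R.IsKBox k)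
    {V : Finset (Pt n)} (hV : ∀ R ∈ G, R.vertices ⊆ V)
    (cnt : {R // R ∈ G} → ℕ) :
    0 ≤ (∑ u ∈ V, fRfun A B (∑ R : {R // R ∈ G}, (cnt R : ℝ) * (R.1.mult k u : ℝ)) u)
      + min (∑ R : {R // R ∈ G}, (cnt R : ℝ) * (R.1.mult k x₀ : ℝ)) 0 * (B x₀ - A x₀) := by
  classical
  set DU : Multiset (Box n) :=
    ∑ R : {R // R ∈ G}, cnt R • ({R.1} : Multiset (Box n)) with hDU
  have hmemG : ∀ R' ∈ DU, R' ∈ G := by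
    intro R' hR'
    rw [hDU, Multiset.mem_sum] at hR'
    obtain ⟨R, -, hR'2⟩ := hR'
    rw [Multiset.mem_nsmul] at hR'2
    rw [Multiset.mem_singleton] at hR'2
    rw [hR'2.2]
    exact R.2
  have hmem : memRk k (cubeSet n) DU := by
    intro R' hR'
    have hG' := hG R' (hmemG R' hR')
    exact ⟨hG', fun v hv => Box.vertex_inCube hG' hv⟩
  have hmlt : ∀ u, multDU k DU u = ∑ R : {R // R ∈ G}, (cnt R : ℤ) * R.1.mult k u := by
    intro u
    rw [hDU, multDU_finsum]
    apply Finset.sum_congr rfl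
    intro R _
    rw [multDU_nsmul, multDU_singleton]
  have hcast : ∀ u, ((multDU k DU u : ℤ) : ℝ)
      = ∑ R : {R // R ∈ G}, (cnt R : ℝ) * (R.1.mult k u : ℝ) := by
    intro u
    rw [hmlt u]
    push_cast
    rfl
  have hsub : DU.toFinset.biUnion Box.vertices ⊆ V := by
    intro v hv
    rw [Finset.mem_biUnion] at hv
    obtain ⟨R', hR', hv2⟩ := hv
    exact hV R' (hmemG R' (Multiset.mem_toFinset.1 hR')) hv2
  have hLkeq : Lk k A B DU = ∑ u ∈ V,
      fRfun A B (∑ R : {R // R ∈ G}, (cnt R : ℝ) * (R.1.mult k u : ℝ)) u := by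
    rw [Lk_eq_sum_superset hsub]
    apply Finset.sum_congr rfl
    intro u _
    rw [← hcast u, fRfun_int_cast]
  rw [← hLkeq, ← hcast x₀]
  by_cases hM : 0 ≤ multDU k DU x₀
  · rw [min_eq_right (by exact_mod_cast hM), zero_mul, add_zero]
    exact hL DU hmem
  · push_neg at hM
    have hMR : ((multDU k DU x₀ : ℤ) : ℝ) < 0 := by exact_mod_cast hM
    have habs : |((multDU k DU x₀ : ℤ) : ℝ)| = -((multDU k DU x₀ : ℤ) : ℝ) :=
      abs_of_neg hMR
    have hbdd : BddBelow {r : ℝ | ∃ DU' : Multiset (Box n),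
        memRk k (cubeSet n) DU' ∧ multDU k DU' x₀ < 0 ∧
        r = Lk k A B DU' / |(multDU k DU' x₀ : ℝ)|} := by
      refine ⟨0, ?_⟩
      rintro r ⟨D, hD, hDx, rfl⟩
      exact div_nonneg (hL D hD) (abs_nonneg _)
    have hrmem : Lk k A B DU / |((multDU k DU x₀ : ℤ) : ℝ)| ∈ {r : ℝ |
        ∃ DU' : Multiset (Box n), memRk k (cubeSet n) DU' ∧ multDU k DU' x₀ < 0 ∧
        r = Lk k A B DU' / |(multDU k DU' x₀ : ℝ)|} := ⟨DU, hmem, hM, rfl⟩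
    have h1 : Pneg k (cubeSet n) A B x₀ ≤ Lk k A B DU / |((multDU k DU x₀ : ℤ) : ℝ)| :=
      csInf_le hbdd hrmem
    have h2 : B x₀ - A x₀ ≤ Lk k A B DU / |((multDU k DU x₀ : ℤ) : ℝ)| :=
      le_trans hPneg h1
    have hpos : 0 < |((multDU k DU x₀ : ℤ) : ℝ)| := by
      rw [habs]
      linarith
    rw [le_div_iff₀ hpos] at h2
    rw [min_eq_left (le_of_lt hMR)]
    rw [habs] at h2
    nlinarith [h2]

/-- Ψ-nonnegativity for arbitrary nonnegative real coefficient vectors. -/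
theorem psi_nonneg {k : ℕ} {A B : Pt n → ℝ}
    (hAI : MapsToI A) (hBI : MapsToI B) (hAB : ∀ x, inCube x → A x ≤ B x)
    (hL : ∀ DU : Multiset (Box n), memRk k (cubeSet n) DU → 0 ≤ Lk k A B DU)
    {x₀ : Pt n} (hx₀ : inCube x₀)
    (hPneg : B x₀ - A x₀ ≤ Pneg k (cubeSet n) A B x₀)
    {G : Finset (Box n)} (hG : ∀ R ∈ G, R.IsKBox k)
    {V : Finset (Pt n)} (hV : ∀ R ∈ G, R.vertices ⊆ V)
    (hVcube : ∀ v ∈ V, inCube v)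
    (lam : {R // R ∈ G} → ℝ) (hlam : ∀ R, 0 ≤ lam R) :
    0 ≤ (∑ u ∈ V, fRfun A B (∑ R : {R // R ∈ G}, lam R * (R.1.mult k u : ℝ)) u)
      + min (∑ R : {R // R ∈ G}, lam R * (R.1.mult k x₀ : ℝ)) 0 * (B x₀ - A x₀) := by
  classical
  set Ψ : ({R // R ∈ G} → ℝ) → ℝ := fun l =>
    (∑ u ∈ V, fRfun A B (∑ R : {R // R ∈ G}, l R * (R.1.mult k u : ℝ)) u)
      + min (∑ R : {R // R ∈ G}, l R * (R.1.mult k x₀ : ℝ)) 0 * (B x₀ - A x₀) with hΨ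
  show 0 ≤ Ψ lam
  by_contra hneg
  push_neg at hneg
  set ε : ℝ := -Ψ lam with hε
  have hεpos : 0 < ε := by rw [hε]; linarith
  set K : ℝ := ((V.card : ℝ) + 1) * ((G.card : ℝ) + 1) with hK
  have hKpos : 0 < K := by positivity
  obtain ⟨N, hN⟩ := exists_nat_gt (K / ε)
  have hNpos : (0 : ℝ) < N := lt_trans (by positivity) hN
  have hKN : K / N < ε := by
    rw [div_lt_iff₀ hNpos]
    calc K = K / ε * ε := by field_simp
    _ < N * ε := by
      apply mul_lt_mul_of_pos_right hN hεpos
    _ = ε * N := by ring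
  set lam' : {R // R ∈ G} → ℝ := fun R => (⌈lam R * N⌉₊ : ℝ) / N with hlam'
  have claim1 : ∀ R, |lam R - lam' R| ≤ 1 / N := by
    intro R
    have h1 : lam R ≤ lam' R := by
      rw [hlam']
      dsimp only
      rw [le_div_iff₀ hNpos]
      exact Nat.le_ceil _
    have h2 : lam' R ≤ lam R + 1 / N := by
      rw [hlam']
      dsimp only
      rw [div_le_iff₀ hNpos]
      have h3 : (⌈lam R * N⌉₊ : ℝ) < lam R * N + 1 :=
        Nat.ceil_lt_add_one (mul_nonneg (hlam R) (le_of_lt hNpos))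
      have h4 : (lam R + 1 / N) * N = lam R * N + 1 := by
        field_simp
      linarith
    rw [abs_sub_comm, abs_of_nonneg (by linarith)]
    linarith
  have claim2 : ∀ u : Pt n,
      |(∑ R : {R // R ∈ G}, lam R * (R.1.mult k u : ℝ))
        - ∑ R : {R // R ∈ G}, lam' R * (R.1.mult k u : ℝ)| ≤ (G.card : ℝ) / N := by
    intro u
    rw [← Finset.sum_sub_distrib]
    refine le_trans (Finset.abs_sum_le_sum_abs _ _) ?_
    have hbound : ∀ R : {R // R ∈ G},
        |lam R * (R.1.mult k u : ℝ) - lam' R * (R.1.mult k u : ℝ)| ≤ 1 / N := by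
      intro R
      rw [← sub_mul, abs_mul]
      calc |lam R - lam' R| * |(R.1.mult k u : ℝ)|
          ≤ (1 / N) * 1 := by
            apply mul_le_mul (claim1 R) ?_ (abs_nonneg _) (by positivity)
            have := R.1.abs_mult_le_one k u
            exact_mod_cast this
        _ = 1 / N := mul_one _
    refine le_trans (Finset.sum_le_sum (fun R _ => hbound R)) ?_
    rw [Finset.sum_const, Finset.card_univ, Fintype.card_coe, nsmul_eq_mul, mul_one_div]
  have claim3 : |Ψ lam - Ψ lam'| ≤ K / N := by
    have hSdiff : |(∑ u ∈ V, fRfun A B (∑ R : {R // R ∈ G}, lam R * (R.1.mult k u : ℝ)) u)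
        - ∑ u ∈ V, fRfun A B (∑ R : {R // R ∈ G}, lam' R * (R.1.mult k u : ℝ)) u|
        ≤ (V.card : ℝ) * ((G.card : ℝ) / N) := by
      rw [← Finset.sum_sub_distrib]
      refine le_trans (Finset.abs_sum_le_sum_abs _ _) ?_
      refine le_trans (Finset.sum_le_sum (fun u hu => le_trans
        (fRfun_lip (hAI u (hVcube u hu)).1 (hAB u (hVcube u hu))
          (hBI u (hVcube u hu)).2 _ _) (claim2 u))) ?_
      rw [Finset.sum_const, nsmul_eq_mul]
    have hmdiff : |min (∑ R : {R // R ∈ G}, lam R * (R.1.mult k x₀ : ℝ)) 0 * (B x₀ - A x₀)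
        - min (∑ R : {R // R ∈ G}, lam' R * (R.1.mult k x₀ : ℝ)) 0 * (B x₀ - A x₀)|
        ≤ (G.card : ℝ) / N := by
      rw [← sub_mul, abs_mul]
      have h1 : |min (∑ R : {R // R ∈ G}, lam R * (R.1.mult k x₀ : ℝ)) 0
          - min (∑ R : {R // R ∈ G}, lam' R * (R.1.mult k x₀ : ℝ)) 0|
          ≤ |(∑ R : {R // R ∈ G}, lam R * (R.1.mult k x₀ : ℝ))
            - ∑ R : {R // R ∈ G}, lam' R * (R.1.mult k x₀ : ℝ)| := by
        refine le_trans (abs_min_sub_min_le_max _ _ _ _) ?_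
        rw [sub_zero, abs_zero]
        exact max_le le_rfl (abs_nonneg _)
      have h2 : |B x₀ - A x₀| ≤ 1 := by
        rw [abs_of_nonneg (by linarith [hAB x₀ hx₀])]
        have := (hAI x₀ hx₀).1
        have := (hBI x₀ hx₀).2
        linarith
      calc |min (∑ R : {R // R ∈ G}, lam R * (R.1.mult k x₀ : ℝ)) 0
            - min (∑ R : {R // R ∈ G}, lam' R * (R.1.mult k x₀ : ℝ)) 0| * |B x₀ - A x₀|
          ≤ ((G.card : ℝ) / N) * 1 := by
            apply mul_le_mul (le_trans h1 (claim2 x₀)) h2 (abs_nonneg _) (by positivity)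
        _ = (G.card : ℝ) / N := mul_one _
    have hsplit : Ψ lam - Ψ lam'
        = ((∑ u ∈ V, fRfun A B (∑ R : {R // R ∈ G}, lam R * (R.1.mult k u : ℝ)) u)
            - ∑ u ∈ V, fRfun A B (∑ R : {R // R ∈ G}, lam' R * (R.1.mult k u : ℝ)) u)
          + (min (∑ R : {R // R ∈ G}, lam R * (R.1.mult k x₀ : ℝ)) 0 * (B x₀ - A x₀)
            - min (∑ R : {R // R ∈ G}, lam' R * (R.1.mult k x₀ : ℝ)) 0 * (B x₀ - A x₀)) := by
      rw [hΨ]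
      ring
    rw [hsplit]
    refine le_trans (abs_add_le _ _) ?_
    have hfin : (V.card : ℝ) * ((G.card : ℝ) / N) + (G.card : ℝ) / N ≤ K / N := by
      rw [mul_div_assoc', ← add_div, div_le_div_iff₀ hNpos hNpos]
      have h0 : (0:ℝ) ≤ (V.card : ℝ) := by positivity
      have h1 : (0:ℝ) ≤ (G.card : ℝ) := by positivity
      have h2 : (V.card : ℝ) * (G.card : ℝ) + (G.card : ℝ) ≤ K := by
        rw [hK]
        nlinarith
      nlinarith [hNpos]
    linarith [hSdiff, hmdiff]
  have claim4 : 0 ≤ Ψ lam' := by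
    set cnt : {R // R ∈ G} → ℕ := fun R => ⌈lam R * N⌉₊ with hcnt
    have hMl : ∀ u : Pt n, (∑ R : {R // R ∈ G}, lam' R * (R.1.mult k u : ℝ))
        = (∑ R : {R // R ∈ G}, (cnt R : ℝ) * (R.1.mult k u : ℝ)) / N := by
      intro u
      rw [Finset.sum_div]
      apply Finset.sum_congr rfl
      intro R _
      rw [hlam']
      dsimp only
      rw [div_mul_eq_mul_div]
    have hΨeq : Ψ lam'
        = ((∑ u ∈ V, fRfun A B (∑ R : {R // R ∈ G}, (cnt R : ℝ) * (R.1.mult k u : ℝ)) u)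
          + min (∑ R : {R // R ∈ G}, (cnt R : ℝ) * (R.1.mult k x₀ : ℝ)) 0
              * (B x₀ - A x₀)) / N := by
      rw [hΨ]
      dsimp only
      rw [add_div, Finset.sum_div]
      congr 1
      · apply Finset.sum_congr rfl
        intro u _
        rw [hMl u, fRfun_div _ _ _ _ _ hNpos]
      · rw [hMl x₀, ← zero_div (N : ℝ), min_div_div_right (le_of_lt hNpos),
          zero_div, div_mul_eq_mul_div]
    rw [hΨeq]
    exact div_nonneg (psi_int hL hPneg hG hV cnt) (le_of_lt hNpos)
  have : Ψ lam ≥ Ψ lam' - |Ψ lam - Ψ lam'| := by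
    have := abs_sub_abs_le_abs_sub (Ψ lam) (Ψ lam')
    have h5 := abs_nonneg (Ψ lam - Ψ lam')
    have h6 : Ψ lam' - Ψ lam ≤ |Ψ lam - Ψ lam'| := by
      rw [abs_sub_comm]
      exact le_abs_self _
    linarith
  have hKN' : |Ψ lam - Ψ lam'| < ε := lt_of_le_of_lt claim3 hKN
  have hfin : Ψ lam > -ε := by linarith [this, claim4, hKN']
  rw [hε] at hfin
  linarith [hfin]

end KIncr

namespace KIncr

variable {n : ℕ}

set_option maxHeartbeats 1000000 in
theorem exists_extremal {k : ℕ} (hk : 1 ≤ k) (hkn : k ≤ n)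
    {A B : Pt n → ℝ} (hA : Standardized A) (hB : Standardized B)
    (hAI : MapsToI A) (hBI : MapsToI B)
    (hAB : ∀ x, inCube x → A x ≤ B x)
    (hL : ∀ DU : Multiset (Box n), memRk k (cubeSet n) DU → 0 ≤ Lk k A B DU)
    {x₀ : Pt n} (hx₀ : inCube x₀)
    (hPneg : B x₀ - A x₀ ≤ Pneg k (cubeSet n) A B x₀) :
    ∃ C : Pt n → ℝ, MapsToI C ∧ Standardized C ∧ KIncreasingOn k (cubeSet n) C ∧
      (∀ u, inCube u → A u ≤ C u ∧ C u ≤ B u) ∧ C x₀ = B x₀ := by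
  classical
  set lf : Pt n → ℝ := fun u => if u = x₀ then B x₀ else if inCube u then A u else 0 with hlf
  set mf : Pt n → ℝ := fun u => if u = x₀ then B x₀ else if inCube u then B u else 0 with hmf
  have hlfmf : ∀ u, lf u ≤ mf u := by
    intro u
    rw [hlf, hmf]
    dsimp only
    by_cases h : u = x₀
    · rw [if_pos h, if_pos h]
    · rw [if_neg h, if_neg h]
      by_cases h2 : inCube u
      · rw [if_pos h2, if_pos h2]
        exact hAB u h2
      · rw [if_neg h2, if_neg h2]
  set S : Set (Pt n → ℝ) := Set.pi Set.univ (fun u => Set.Icc (lf u) (mf u)) with hS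
  have hScomp : IsCompact S := isCompact_univ_pi (fun u => isCompact_Icc)
  set F : Box n → Set (Pt n → ℝ) := fun R => {C | R.IsKBox k → 0 ≤ Vvol k C R} with hF
  have hFclosed : ∀ R, IsClosed (F R) := by
    intro R
    by_cases hR : R.IsKBox k
    · have he : F R = {C | 0 ≤ Vvol k C R} := by
        ext C
        simp [hF, hR]
      rw [he]
      have hcont : Continuous (fun C : Pt n → ℝ => Vvol k C R) := by
        apply continuous_finset_sum
        intro v _
        exact continuous_const.mul (continuous_apply v)
      exact isClosed_le continuous_const hcont
    · have he : F R = Set.univ := by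
        ext C
        simp [hF, hR]
      rw [he]
      exact isClosed_univ
  have hfin : ∀ G₀ : Finset (Box n), (S ∩ ⋂ R ∈ G₀, F R).Nonempty := by
    intro G₀
    set G : Finset (Box n) := G₀.filter (fun R => R.IsKBox k) with hGdef
    have hG : ∀ R ∈ G, R.IsKBox k := fun R hR => (Finset.mem_filter.1 hR).2
    set V : Finset (Pt n) := insert x₀ (G.biUnion Box.vertices) with hVdef
    have hVsub : ∀ R ∈ G, R.vertices ⊆ V := fun R hR v hv =>
      Finset.mem_insert_of_mem (Finset.mem_biUnion.2 ⟨R, hR, hv⟩)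
    have hx₀V : x₀ ∈ V := Finset.mem_insert_self _ _
    have hVcube : ∀ v ∈ V, inCube v := by
      intro v hv
      rcases Finset.mem_insert.1 hv with rfl | hv2
      · exact hx₀
      · obtain ⟨R, hR, hv3⟩ := Finset.mem_biUnion.1 hv2
        exact Box.vertex_inCube (hG R hR) hv3
    set e : {v // v ∈ V} ≃ Fin (Fintype.card {v // v ∈ V}) :=
      Fintype.equivFin {v // v ∈ V} with he
    set row : ({R // R ∈ G} ⊕ ({v // v ∈ V} ⊕ {v // v ∈ V})) → {v // v ∈ V} → ℝ :=
      fun i v =>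
        match i with
        | .inl R => (R.1.mult k v.1 : ℝ)
        | .inr (.inl u) => if v = u then 1 else 0
        | .inr (.inr u) => if v = u then -1 else 0
      with hrow
    set bval : ({R // R ∈ G} ⊕ ({v // v ∈ V} ⊕ {v // v ∈ V})) → ℝ := fun i =>
      match i with
      | .inl _ => 0
      | .inr (.inl u) => lf u.1
      | .inr (.inr u) => -(mf u.1)
      with hbval
    have hfark := farkas (Fintype.card {v // v ∈ V})
      (r := fun i w => row i (e.symm w)) (b := bval) ?hyp
    case hyp =>
      intro y hy hcol
      set lamy : {R // R ∈ G} → ℝ := fun R => y (.inl R) with hlamy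
      set al : {v // v ∈ V} → ℝ := fun v => y (.inr (.inl v)) with hal
      set be : {v // v ∈ V} → ℝ := fun v => y (.inr (.inr v)) with hbe
      set M : Pt n → ℝ := fun u => ∑ R : {R // R ∈ G}, lamy R * (R.1.mult k u : ℝ) with hM
      have hexpand : ∀ g : ({R // R ∈ G} ⊕ ({v // v ∈ V} ⊕ {v // v ∈ V})) → ℝ,
          (∑ i, y i * g i) = (∑ R : {R // R ∈ G}, lamy R * g (.inl R))
            + ((∑ v : {v // v ∈ V}, al v * g (.inr (.inl v)))
              + ∑ v : {v // v ∈ V}, be v * g (.inr (.inr v))) := by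
        intro g
        rw [Fintype.sum_sum_type, Fintype.sum_sum_type]
      have hcol' : ∀ w, (∑ i, y i * row i (e.symm w)) = 0 := hcol
      have hbal : ∀ v : {v // v ∈ V}, M v.1 + al v - be v = 0 := by
        intro v
        have h0 := hcol' (e v)
        simp only [Equiv.symm_apply_apply] at h0
        rw [hexpand (fun i => row i v)] at h0
        have h2 : (∑ u : {v // v ∈ V}, al u * row (.inr (.inl u)) v) = al v := by
          rw [hrow]
          simp only [mul_ite, mul_one, mul_zero]
          have : ∀ u : {v // v ∈ V}, (if v = u then al u else 0)
              = (if u = v then al u else 0) := by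
            intro u
            by_cases h : u = v
            · rw [if_pos h, if_pos h.symm]
            · rw [if_neg h, if_neg (fun hh => h hh.symm)]
          rw [Finset.sum_congr rfl (fun u _ => this u)]
          rw [Finset.sum_ite_eq' Finset.univ v al, if_pos (Finset.mem_univ v)]
        have h3 : (∑ u : {v // v ∈ V}, be u * row (.inr (.inr u)) v) = -be v := by
          rw [hrow]
          simp only [mul_ite, mul_neg, mul_one, mul_zero]
          have : ∀ u : {v // v ∈ V}, (if v = u then -be u else 0)
              = (if u = v then -be u else 0) := by
            intro u
            by_cases h : u = v
            · rw [if_pos h, if_pos h.symm]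
            · rw [if_neg h, if_neg (fun hh => h hh.symm)]
          rw [Finset.sum_congr rfl (fun u _ => this u)]
          rw [Finset.sum_ite_eq' Finset.univ v (fun u => -be u), if_pos (Finset.mem_univ v)]
        rw [h2, h3] at h0
        rw [hM]
        dsimp only
        rw [hrow] at h0
        dsimp only at h0
        linarith [h0]
      -- now bound the objective
      rw [hexpand bval]
      have hz : (∑ R : {R // R ∈ G}, lamy R * bval (.inl R)) = 0 := by
        rw [hbval]
        simp
      rw [hz, zero_add]
      set x₀sub : {v // v ∈ V} := ⟨x₀, hx₀V⟩ with hx₀sub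
      have pointclaim : ∀ v : {v // v ∈ V},
          al v * bval (.inr (.inl v)) + be v * bval (.inr (.inr v))
            ≤ -(fRfun A B (M v.1) v.1)
              + (if v = x₀sub then fRfun A B (M v.1) x₀ - (M v.1) * B x₀ else 0) := by
        intro v
        have hbv := hbal v
        have hbe_nn : 0 ≤ be v := hy _
        have hal_nn : 0 ≤ al v := hy _
        rw [hbval]
        dsimp only
        by_cases hvx : v = x₀sub
        · rw [if_pos hvx]
          have hv1 : v.1 = x₀ := by rw [hvx]
          rw [hv1] at hbv
          rw [hv1, hlf, hmf]
          dsimp only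
          rw [if_pos rfl, if_pos rfl]
          apply le_of_eq
          linear_combination (B x₀) * hbv
        · rw [if_neg hvx, add_zero]
          have hv1 : v.1 ≠ x₀ := fun h => hvx (Subtype.ext h)
          have hvc : inCube v.1 := hVcube v.1 v.2
          rw [hlf, hmf]
          dsimp only
          rw [if_neg hv1, if_pos hvc, if_neg hv1, if_pos hvc]
          have hABv := hAB v.1 hvc
          have p1 : 0 ≤ al v * (B v.1 - A v.1) :=
            mul_nonneg hal_nn (sub_nonneg.2 hABv)
          have p2 : 0 ≤ (al v + M v.1) * (B v.1 - A v.1) :=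
            mul_nonneg (by linarith [hbv, hbe_nn]) (sub_nonneg.2 hABv)
          have hbee : be v = al v + M v.1 := by linarith [hbv]
          rw [hbee]
          rw [fRfun]
          rcases lt_trichotomy (M v.1) 0 with hm | hm | hm
          · rw [if_neg (by linarith), if_pos hm]
            nlinarith [hbv, p1, p2]
          · rw [if_neg (by linarith), if_neg (by linarith), hm]
            nlinarith [hbv, p1, p2]
          · rw [if_pos hm]
            nlinarith [hbv, p1, p2]
      have hsum := Finset.sum_le_sum (fun v (_ : v ∈ Finset.univ) => pointclaim v)
      have hcombine : (∑ v : {v // v ∈ V}, al v * bval (.inr (.inl v)))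
          + (∑ v : {v // v ∈ V}, be v * bval (.inr (.inr v)))
          = ∑ v : {v // v ∈ V},
            (al v * bval (.inr (.inl v)) + be v * bval (.inr (.inr v))) :=
        (Finset.sum_add_distrib).symm
      rw [hcombine]
      have hsplit : (∑ v : {v // v ∈ V},
          (-(fRfun A B (M v.1) v.1)
            + (if v = x₀sub then fRfun A B (M v.1) x₀ - (M v.1) * B x₀ else 0)))
          = -(∑ v : {v // v ∈ V}, fRfun A B (M v.1) v.1)
            + (fRfun A B (M x₀sub.1) x₀ - (M x₀sub.1) * B x₀) := by
        rw [Finset.sum_add_distrib, ← Finset.sum_neg_distrib]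
        congr 1
        rw [Finset.sum_ite_eq' Finset.univ x₀sub
          (fun v => fRfun A B (M v.1) x₀ - (M v.1) * B x₀), if_pos (Finset.mem_univ _)]
      have hcoe : (∑ v : {v // v ∈ V}, fRfun A B (M v.1) v.1)
          = ∑ u ∈ V, fRfun A B (M u) u :=
        Finset.sum_coe_sort V (fun u => fRfun A B (M u) u)
      have hpsi' : 0 ≤ (∑ u ∈ V, fRfun A B (M u) u)
          + min (M x₀) 0 * (B x₀ - A x₀) :=
        psi_nonneg hAI hBI hAB hL hx₀ hPneg hG hVsub hVcube lamy (fun R => hy _)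
      have hx₀1 : x₀sub.1 = x₀ := rfl
      refine le_trans hsum ?_
      rw [hsplit, hcoe, hx₀1]
      rw [fRfun]
      rcases lt_trichotomy (M x₀) 0 with hm | hm | hm
      · rw [if_neg (by linarith), if_pos hm]
        rw [min_eq_left (le_of_lt hm)] at hpsi'
        nlinarith [hpsi']
      · rw [if_neg (by linarith), if_neg (by linarith), hm]
        rw [hm, min_self, zero_mul, add_zero] at hpsi'
        nlinarith [hpsi']
      · rw [if_pos hm]
        rw [min_eq_right (le_of_lt hm), zero_mul, add_zero] at hpsi'
        nlinarith [hpsi']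
    obtain ⟨c, hc0⟩ := hfark
    have hc : ∀ i, bval i ≤ ∑ w, row i (e.symm w) * c w := hc0
    set CC : Pt n → ℝ := fun u => if h : u ∈ V then c (e ⟨u, h⟩) else lf u with hCC
    have hrowsum : ∀ i, (∑ w, row i (e.symm w) * c w)
        = ∑ v : {v // v ∈ V}, row i v * c (e v) := by
      intro i
      rw [← Equiv.sum_comp e.symm (fun v => row i v * c (e v))]
      apply Finset.sum_congr rfl
      intro w _
      rw [Equiv.apply_symm_apply]
    have hCCV : ∀ v : {v // v ∈ V}, CC v.1 = c (e v) := by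
      intro v
      rw [hCC]
      dsimp only
      rw [dif_pos v.2]
    have hlowV : ∀ v : {v // v ∈ V}, lf v.1 ≤ CC v.1 := by
      intro v
      have h0 := (hc (.inr (.inl v))).trans_eq (hrowsum (.inr (.inl v)))
      have h1 : (∑ u : {v // v ∈ V}, row (.inr (.inl v)) u * c (e u)) = c (e v) := by
        rw [hrow]
        simp only [ite_mul, one_mul, zero_mul]
        rw [Finset.sum_ite_eq' Finset.univ v (fun u => c (e u)), if_pos (Finset.mem_univ _)]
      rw [h1] at h0
      rw [hCCV]
      exact h0
    have huppV : ∀ v : {v // v ∈ V}, CC v.1 ≤ mf v.1 := by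
      intro v
      have h0 := (hc (.inr (.inr v))).trans_eq (hrowsum (.inr (.inr v)))
      have h1 : (∑ u : {v // v ∈ V}, row (.inr (.inr v)) u * c (e u)) = -c (e v) := by
        rw [hrow]
        simp only [ite_mul, neg_mul, one_mul, zero_mul]
        rw [Finset.sum_ite_eq' Finset.univ v (fun u => -c (e u)), if_pos (Finset.mem_univ _)]
      rw [h1, hbval] at h0
      dsimp only at h0
      rw [hCCV]
      linarith [h0]
    have hSmem : CC ∈ S := by
      rw [hS]
      intro u _
      by_cases h : u ∈ V
      · exact ⟨hlowV ⟨u, h⟩, huppV ⟨u, h⟩⟩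
      · have : CC u = lf u := by
          rw [hCC]
          dsimp only
          rw [dif_neg h]
        rw [this]
        exact ⟨le_rfl, hlfmf u⟩
    refine ⟨CC, hSmem, ?_⟩
    rw [Set.mem_iInter₂]
    intro R hRG₀
    intro hKR
    have hRG : R ∈ G := Finset.mem_filter.2 ⟨hRG₀, hKR⟩
    have h0 := (hc (.inl ⟨R, hRG⟩)).trans_eq (hrowsum (.inl ⟨R, hRG⟩))
    have h1 : (∑ v : {v // v ∈ V}, row (.inl ⟨R, hRG⟩) v * c (e v))
        = ∑ v : {v // v ∈ V}, (R.mult k v.1 : ℝ) * CC v.1 := by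
      apply Finset.sum_congr rfl
      intro v _
      rw [hrow, hCCV]
    rw [h1] at h0
    have h2 : (∑ v : {v // v ∈ V}, (R.mult k v.1 : ℝ) * CC v.1)
        = ∑ u ∈ V, (R.mult k u : ℝ) * CC u :=
      Finset.sum_coe_sort V (fun u => (R.mult k u : ℝ) * CC u)
    rw [h2, sum_mult_mul_eq_Vvol (hVsub R hRG) CC] at h0
    rw [hbval] at h0
    exact h0
  -- compactness
  obtain ⟨Cs, hCS, hCF⟩ := hScomp.inter_iInter_nonempty F hFclosed hfin
  have hbounds0 : ∀ u, Cs u ∈ Set.Icc (lf u) (mf u) := by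
    intro u
    rw [hS] at hCS
    exact hCS u (Set.mem_univ u)
  have hCx₀ : Cs x₀ = B x₀ := by
    have h0 := hbounds0 x₀
    rw [hlf, hmf] at h0
    dsimp only at h0
    rw [if_pos rfl, if_pos rfl] at h0
    exact le_antisymm h0.2 h0.1
  have hbounds : ∀ u, inCube u → A u ≤ Cs u ∧ Cs u ≤ B u := by
    intro u hu
    by_cases h : u = x₀
    · subst h
      rw [hCx₀]
      exact ⟨hAB u hu, le_rfl⟩
    · have h0 := hbounds0 u
      rw [hlf, hmf] at h0
      dsimp only at h0
      rw [if_neg h, if_pos hu, if_neg h, if_pos hu] at h0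
      exact h0
  have hKinc : KIncreasingOn k (cubeSet n) Cs := by
    intro R hR _
    exact (Set.mem_iInter.1 hCF R) hR
  have hzero : ∀ w, inCube w → (∃ j, w j = 0) → Cs w = 0 := by
    intro w hw hex
    have h1 : B w = 0 := hB.1 w hw hex
    have h2 : 0 ≤ A w := (hAI w hw).1
    have h3 := hbounds w hw
    linarith [h3.1, h3.2]
  have hone : OneIncreasing Cs := oneIncreasing_of_kIncreasing hk hkn Cs hzero hKinc
  have hcube1 : inCube (fun _ : Fin n => (1 : ℝ)) := fun i => ⟨zero_le_one, le_rfl⟩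
  have h1val : Cs (fun _ => (1 : ℝ)) = 1 := by
    have h3 := hbounds _ hcube1
    rw [hA.2.2] at h3
    rw [hB.2.2] at h3
    linarith [h3.1, h3.2]
  have hMaps : MapsToI Cs := by
    intro u hu
    have h3 := hbounds u hu
    exact ⟨le_trans (hAI u hu).1 h3.1, le_trans h3.2 (hBI u hu).2⟩
  exact ⟨Cs, hMaps, ⟨hzero, hone, h1val⟩, hKinc, hbounds, hCx₀⟩

end KIncr

open KIncr
/-- Theorem 8.1: coherence at the upper bound for standardized
functions. -/
theorem stmt17 (n k : ℕ) (hn : 1 ≤ n) (hk1 : 1 ≤ k) (hkn : k ≤ n)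
    (A B : Pt n → ℝ) (hA : Standardized A) (hB : Standardized B)
    (hAI : MapsToI A) (hBI : MapsToI B)
    (hAB : ∀ x : Pt n, inCube x → A x ≤ B x)
    (S : Set ℝ) (hS : S.Countable) (hSsub : S ⊆ Set.Icc (0:ℝ) 1)
    (hCondS : CondS A S ∨ CondS B S)
    (hL : ∀ DU : Multiset (Box n), memRk k (cubeSet n) DU → 0 ≤ Lk k A B DU) :
    (∀ x : Pt n, inCube x → B x - A x ≤ Pneg k (cubeSet n) A B x) ↔
    (∀ x : Pt n, inCube x →
      B x = sSup {y : ℝ | ∃ C : Pt n → ℝ, MapsToI C ∧ Standardized C ∧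
        KIncreasingOn k (cubeSet n) C ∧
        (∀ u : Pt n, inCube u → A u ≤ C u ∧ C u ≤ B u) ∧ y = C x}) := by
  constructor
  · intro hPneg x₀ hx₀
    obtain ⟨C, hCM, hCS, hCK, hCb, hCx⟩ :=
      exists_extremal hk1 hkn hA hB hAI hBI hAB hL hx₀ (hPneg x₀ hx₀)
    have hmem : B x₀ ∈ {y : ℝ | ∃ C : Pt n → ℝ, MapsToI C ∧ Standardized C ∧
        KIncreasingOn k (cubeSet n) C ∧
        (∀ u : Pt n, inCube u → A u ≤ C u ∧ C u ≤ B u) ∧ y = C x₀} :=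
      ⟨C, hCM, hCS, hCK, hCb, hCx.symm⟩
    have hub : ∀ y ∈ {y : ℝ | ∃ C : Pt n → ℝ, MapsToI C ∧ Standardized C ∧
        KIncreasingOn k (cubeSet n) C ∧
        (∀ u : Pt n, inCube u → A u ≤ C u ∧ C u ≤ B u) ∧ y = C x₀}, y ≤ B x₀ := by
      rintro y ⟨C', h1, h2, h3, h4, rfl⟩
      exact (h4 x₀ hx₀).2
    exact le_antisymm (le_csSup ⟨B x₀, hub⟩ hmem) (csSup_le ⟨B x₀, hmem⟩ hub)
  · intro hSup x hx
    have hnn : ∀ r ∈ {r : ℝ | ∃ DU : Multiset (Box n), memRk k (cubeSet n) DU ∧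
        multDU k DU x < 0 ∧ r = Lk k A B DU / |(multDU k DU x : ℝ)|}, (0:ℝ) ≤ r := by
      rintro r ⟨DU, hDU, hm, rfl⟩
      exact div_nonneg (hL DU hDU) (abs_nonneg _)
    by_cases hBA : B x ≤ A x
    · have h0 : 0 ≤ Pneg k (cubeSet n) A B x := Real.sInf_nonneg hnn
      linarith
    · push_neg at hBA
      have hA0 : 0 ≤ A x := (hAI x hx).1
      have hpos : ∀ i, 0 < x i := by
        intro i
        rcases lt_or_eq_of_le (hx i).1 with h | h
        · exact h
        · exfalso
          have hA1 : A x = 0 := hA.1 x hx ⟨i, h.symm⟩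
          have hB1 : B x = 0 := hB.1 x hx ⟨i, h.symm⟩
          linarith
      have hlt1 : ∃ i, x i < 1 := by
        by_contra h
        push_neg at h
        have hx1 : x = fun _ => (1:ℝ) := by
          funext i
          exact le_antisymm (hx i).2 (h i)
        rw [hx1, hA.2.2, hB.2.2] at hBA
        exact lt_irrefl _ hBA
      obtain ⟨i₀, hi₀⟩ := hlt1
      obtain ⟨DU₀, hDU₀, hm₀⟩ := exists_neg_DU hk1 hkn hx hpos hi₀
      unfold Pneg
      refine le_csInf ⟨Lk k A B DU₀ / |(multDU k DU₀ x : ℝ)|,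
        DU₀, hDU₀, by rw [hm₀]; norm_num, rfl⟩ ?_
      rintro r ⟨DU, hDU, hm, rfl⟩
      have hsup := hSup x hx
      have habs : 0 < |(multDU k DU x : ℝ)| := by
        rw [abs_pos]
        exact_mod_cast ne_of_lt hm
      have hY : {y : ℝ | ∃ C : Pt n → ℝ, MapsToI C ∧ Standardized C ∧
          KIncreasingOn k (cubeSet n) C ∧
          (∀ u : Pt n, inCube u → A u ≤ C u ∧ C u ≤ B u) ∧ y = C x}.Nonempty := by
        by_contra hempty
        rw [Set.not_nonempty_iff_eq_empty] at hempty
        rw [hempty, Real.sSup_empty] at hsup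
        linarith
      have hub2 : ∀ y ∈ {y : ℝ | ∃ C : Pt n → ℝ, MapsToI C ∧ Standardized C ∧
          KIncreasingOn k (cubeSet n) C ∧
          (∀ u : Pt n, inCube u → A u ≤ C u ∧ C u ≤ B u) ∧ y = C x},
          y ≤ A x + Lk k A B DU / |(multDU k DU x : ℝ)| := by
        rintro y ⟨C', h1, h2, h3, h4, rfl⟩
        have hkb := key_bound h3 (fun u hu => (h4 u hu).1) (fun u hu => (h4 u hu).2)
          hDU hm
        have hdiv : C' x - A x ≤ Lk k A B DU / |(multDU k DU x : ℝ)| :=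
          (le_div_iff₀ habs).2 hkb
        linarith
      have hfin := csSup_le hY hub2
      rw [← hsup] at hfin
      linarith
end

section
/- Let A, B : I^n → I be standardized functions with A ≤ B and fix an integer k with 1 ≤ k ≤ n. Suppose at least one of A and B satisfies Condition S with some countable set S ⊆ [0,1], and that L_k^{(A,B)}(DU) ≥ 0 for all DU ∈ R_k(I^n). Then the following are equivalent: (i) P⁺_k^{(A,B)}(x) ≥ B(x) − A(x) for all x ∈ I^n; (ii) for all x ∈ I^n, A(x) = inf{C(x) : C : I^n → I, A ≤ C ≤ B, C a k-increasing standardized function}. -/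
open scoped Classical BigOperators

open KIncr

namespace KAux

variable {n : ℕ}

/-- canonical vertex map -/
noncomputable def vertM (R : Box n) (ε : Fin n → Bool) : Pt n :=
  fun i => if ε i then R.hi i else R.lo i

/-- set of normalized Boolean vectors (false on degenerate coordinates) -/
noncomputable def Tset (R : Box n) : Finset (Fin n → Bool) :=
  Finset.univ.filter (fun ε => ∀ i, R.lo i = R.hi i → ε i = false)

/-- nondegenerate coordinates -/
noncomputable def nd (R : Box n) : Finset (Fin n) :=
  Finset.univ.filter (fun i => R.lo i < R.hi i)

noncomputable def fR (R : Box n) (ε : Fin n → Bool) : ℕ :=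
  ((nd R).filter (fun i => ε i = false)).card

lemma vertices_def (R : Box n) : R.vertices = Finset.univ.image (vertM R) := rfl

lemma mem_vertices_iff {R : Box n} {v : Pt n} : v ∈ R.vertices ↔ R.IsVertex v := by
  rw [vertices_def, Finset.mem_image]
  constructor
  · rintro ⟨ε, -, rfl⟩ i
    by_cases h : ε i <;> simp [vertM, h]
  · intro hv
    refine ⟨fun i => if v i = R.hi i then true else false, Finset.mem_univ _, ?_⟩
    funext i
    by_cases h' : v i = R.hi i
    · simp [vertM, h']
    · have h := (hv i).resolve_right h'
      simp [vertM, h', h]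
      exact fun e => e.symm

lemma vertM_mem_vertices (R : Box n) (ε : Fin n → Bool) : vertM R ε ∈ R.vertices := by
  rw [vertices_def, Finset.mem_image]
  exact ⟨ε, Finset.mem_univ _, rfl⟩

lemma vertM_normalize (R : Box n) (ε : Fin n → Bool) :
    vertM R (fun i => if R.lo i = R.hi i then false else ε i) = vertM R ε := by
  funext i
  by_cases hd : R.lo i = R.hi i
  · cases h : ε i <;> simp [vertM, hd, h]
  · simp [vertM, hd]

lemma vertices_eq_image (R : Box n) : R.vertices = (Tset R).image (vertM R) := by
  rw [vertices_def]
  apply Finset.Subset.antisymm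
  · intro v hv
    rw [Finset.mem_image] at hv ⊢
    obtain ⟨ε, -, rfl⟩ := hv
    refine ⟨fun i => if R.lo i = R.hi i then false else ε i, ?_, vertM_normalize R ε⟩
    simp only [Tset, Finset.mem_filter, Finset.mem_univ, true_and]
    intro i hi; simp [hi]
  · exact Finset.image_subset_image (Finset.subset_univ _)

lemma mem_Tset {R : Box n} {ε : Fin n → Bool} :
    ε ∈ Tset R ↔ ∀ i, R.lo i = R.hi i → ε i = false := by
  simp [Tset]

lemma vertM_injOn (R : Box n) :
    ∀ ε ∈ Tset R, ∀ ε' ∈ Tset R, vertM R ε = vertM R ε' → ε = ε' := by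
  intro ε hε ε' hε' h
  rw [mem_Tset] at hε hε'
  funext i
  by_cases hd : R.lo i = R.hi i
  · rw [hε i hd, hε' i hd]
  · have := congrFun h i
    cases hb : ε i <;> cases hb' : ε' i <;> simp [vertM, hb, hb'] at this ⊢
    · exact absurd this hd
    · exact absurd this.symm hd

lemma sum_vertices (R : Box n) (f : Pt n → ℝ) :
    ∑ v ∈ R.vertices, f v = ∑ ε ∈ Tset R, f (vertM R ε) := by
  rw [vertices_eq_image, Finset.sum_image (vertM_injOn R)]

lemma not_mem_nd {R : Box n} (hle : ∀ i, R.lo i ≤ R.hi i) {i : Fin n}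
    (hi : i ∉ nd R) : R.lo i = R.hi i := by
  simp only [nd, Finset.mem_filter, Finset.mem_univ, true_and, not_lt] at hi
  exact le_antisymm (hle i) hi

lemma sign_vertM {k : ℕ} {R : Box n} (hR : R.IsKBox k) {ε : Fin n → Bool}
    (hε : ε ∈ Tset R) : R.sign k (vertM R ε) = (-1) ^ (fR R ε) := by
  rw [mem_Tset] at hε
  have h1 : (Finset.univ.filter (fun i => vertM R ε i = R.lo i)) =
      Finset.univ.filter (fun i => ε i = false) := by
    apply Finset.filter_congr
    intro i _
    cases hb : ε i
    · simp [vertM, hb]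
    · have hd : ¬ R.lo i = R.hi i := by
        intro hd; rw [hε i hd] at hb; exact Bool.false_ne_true hb
      simp only [vertM, hb, if_true]
      constructor
      · intro h; exact absurd h.symm hd
      · intro h; exact absurd h (by simp)
  have h2 : (Finset.univ.filter (fun i => ε i = false)) =
      ((nd R).filter (fun i => ε i = false)) ∪ (nd R)ᶜ := by
    ext i
    simp only [Finset.mem_filter, Finset.mem_univ, true_and, Finset.mem_union,
      Finset.mem_compl]
    by_cases hnd : i ∈ nd R
    · simp [hnd]
    · simp [hnd, hε i (not_mem_nd hR.2.2.1 hnd)]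
  have hdisj : Disjoint ((nd R).filter (fun i => ε i = false)) (nd R)ᶜ :=
    Disjoint.mono_left (Finset.filter_subset _ _) disjoint_compl_right
  have h3 : ((nd R)ᶜ).card = n - k := by
    rw [Finset.card_compl]
    have : (nd R).card = k := hR.2.2.2
    simp [this]
  have h4 : (Finset.univ.filter (fun i => vertM R ε i = R.lo i)).card
      = fR R ε + (n - k) := by
    rw [h1, h2, Finset.card_union_of_disjoint hdisj, h3]; rfl
  rw [Box.sign, h4, add_assoc, pow_add]
  have : ((-1 : ℤ)) ^ (n - k + (n - k)) = 1 := Even.neg_one_pow ⟨n - k, rfl⟩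
  rw [this, mul_one]

lemma vvol_eq {k : ℕ} {R : Box n} (hR : R.IsKBox k) (C : Pt n → ℝ) :
    Vvol k C R = ∑ ε ∈ Tset R, ((-1 : ℤ) ^ (fR R ε) : ℝ) * C (vertM R ε) := by
  rw [Vvol, sum_vertices]
  apply Finset.sum_congr rfl
  intro ε hε
  rw [sign_vertM hR hε]
  push_cast
  ring

lemma vertices_subset_cube {R : Box n} (hlo : inCube R.lo) (hhi : inCube R.hi) :
    ∀ v ∈ R.vertices, v ∈ cubeSet n := by
  intro v hv i
  rcases mem_vertices_iff.mp hv i with h | h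
  · rw [h]; exact hlo i
  · rw [h]; exact hhi i

lemma sum_mult_mul (k : ℕ) (R : Box n) (C : Pt n → ℝ) (F : Finset (Pt n))
    (hF : R.vertices ⊆ F) :
    ∑ u ∈ F, (Box.mult k R u : ℝ) * C u = Vvol k C R := by
  rw [Vvol, ← Finset.sum_subset hF]
  · apply Finset.sum_congr rfl
    intro v hv
    rw [Box.mult, if_pos (mem_vertices_iff.mp hv)]
  · intro u _ hu
    rw [Box.mult, if_neg (fun h => hu (mem_vertices_iff.mpr h)), Int.cast_zero, zero_mul]

lemma sum_multDU (k : ℕ) (DU : Multiset (Box n)) (C : Pt n → ℝ) (F : Finset (Pt n))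
    (h : ∀ R ∈ DU, R.vertices ⊆ F) :
    ∑ u ∈ F, (multDU k DU u : ℝ) * C u = (DU.map (fun R => Vvol k C R)).sum := by
  induction DU using Multiset.induction_on with
  | empty => simp [multDU]
  | cons a s ih =>
    have ha : a.vertices ⊆ F := h a (Multiset.mem_cons_self a s)
    have hs : ∀ R ∈ s, R.vertices ⊆ F := fun R hR => h R (Multiset.mem_cons_of_mem hR)
    have : ∀ u, (multDU k (a ::ₘ s) u : ℝ) = (Box.mult k a u : ℝ) + (multDU k s u : ℝ) := by
      intro u; rw [multDU, Multiset.map_cons, Multiset.sum_cons]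
      push_cast [multDU]; ring
    simp only [this, add_mul, Finset.sum_add_distrib, ih hs,
      sum_mult_mul k a C F ha, Multiset.map_cons, Multiset.sum_cons]

lemma multDU_eq_zero_of_not_mem (k : ℕ) (DU : Multiset (Box n)) (u : Pt n)
    (h : u ∉ DU.toFinset.biUnion Box.vertices) : multDU k DU u = 0 := by
  rw [multDU]
  apply Multiset.sum_eq_zero
  intro x hx
  rw [Multiset.mem_map] at hx
  obtain ⟨R, hR, rfl⟩ := hx
  rw [Box.mult, if_neg]
  intro hv
  exact h (Finset.mem_biUnion.mpr ⟨R, Multiset.mem_toFinset.mpr hR, mem_vertices_iff.mpr hv⟩)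

/-- Key inequality for the backward direction. -/
lemma Lk_ge (k : ℕ) (A B C : Pt n → ℝ)
    (hAC : ∀ u, inCube u → A u ≤ C u) (hCB : ∀ u, inCube u → C u ≤ B u)
    (hC : KIncreasingOn k (cubeSet n) C)
    (DU : Multiset (Box n)) (hDU : memRk k (cubeSet n) DU)
    (x : Pt n) (hm : 0 < multDU k DU x) :
    (multDU k DU x : ℝ) * (B x - C x) ≤ Lk k A B DU := by
  classical
  set F := DU.toFinset.biUnion Box.vertices with hFdef
  have hxF : x ∈ F := by
    by_contra hxF
    rw [multDU_eq_zero_of_not_mem k DU x hxF] at hm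
    exact lt_irrefl 0 hm
  have hFcube : ∀ u ∈ F, inCube u := by
    intro u hu
    rw [Finset.mem_biUnion] at hu
    obtain ⟨R, hR, hv⟩ := hu
    exact (hDU R (Multiset.mem_toFinset.mp hR)).2 u hv
  have hsub : ∀ R ∈ DU, R.vertices ⊆ F := by
    intro R hR v hv
    exact Finset.mem_biUnion.mpr ⟨R, Multiset.mem_toFinset.mpr hR, hv⟩
  have hsum : ∑ u ∈ F, (multDU k DU u : ℝ) * C u = (DU.map (fun R => Vvol k C R)).sum :=
    sum_multDU k DU C F hsub
  have hnn : 0 ≤ (DU.map (fun R => Vvol k C R)).sum := by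
    apply Multiset.sum_nonneg
    intro a ha
    rw [Multiset.mem_map] at ha
    obtain ⟨R, hR, rfl⟩ := ha
    exact hC R (hDU R hR).1 (hDU R hR).2
  -- termwise comparison
  have hterm : ∀ u ∈ F,
      (multDU k DU u : ℝ) * C u + (if u = x then (multDU k DU x : ℝ) * (B x - C x) else 0)
      ≤ (if 0 < multDU k DU u then (multDU k DU u : ℝ) * B u
         else if multDU k DU u < 0 then (multDU k DU u : ℝ) * A u else 0) := by
    intro u hu
    by_cases hux : u = x
    · subst hux
      rw [if_pos rfl, if_pos hm]
      ring_nf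
      exact le_refl _
    · rw [if_neg hux, add_zero]
      rcases lt_trichotomy (multDU k DU u) 0 with h | h | h
      · rw [if_neg (by omega), if_pos h]
        have : (multDU k DU u : ℝ) ≤ 0 := by exact_mod_cast h.le
        exact mul_le_mul_of_nonpos_left (hAC u (hFcube u hu)) this
      · simp [h]
      · rw [if_pos h]
        have : (0:ℝ) ≤ (multDU k DU u : ℝ) := by exact_mod_cast h.le
        exact mul_le_mul_of_nonneg_left (hCB u (hFcube u hu)) this
  have hLk : ∑ u ∈ F, ((multDU k DU u : ℝ) * C u
      + (if u = x then (multDU k DU x : ℝ) * (B x - C x) else 0)) ≤ Lk k A B DU := by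
    rw [Lk]
    exact Finset.sum_le_sum hterm
  rw [Finset.sum_add_distrib, hsum, Finset.sum_ite_eq' F x
    (fun _ => (multDU k DU x : ℝ) * (B x - C x)), if_pos hxF] at hLk
  linarith

/-- descent step: (j+1)-increasing + grounded implies j-increasing -/
lemma kIncr_down (C : Pt n → ℝ)
    (hg : ∀ u : Pt n, inCube u → (∃ i, u i = 0) → C u = 0)
    (j : ℕ) (hjn : j < n) (hC : KIncreasingOn (j+1) (cubeSet n) C) :
    KIncreasingOn j (cubeSet n) C := by
  intro R hRKB hver
  obtain ⟨hlo, hhi, hle, hcard⟩ := hRKB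
  have hcardnd : (nd R).card = j := hcard
  have hne : ((nd R)ᶜ : Finset (Fin n)).Nonempty := by
    rw [← Finset.card_pos, Finset.card_compl, Fintype.card_fin, hcardnd]
    omega
  obtain ⟨i, hi⟩ := hne
  have hinotnd : i ∉ nd R := Finset.mem_compl.mp hi
  have hdeg : R.lo i = R.hi i := not_mem_nd hle hinotnd
  by_cases ht : R.lo i = 0
  · have hz : Vvol j C R = 0 := by
      rw [Vvol]
      apply Finset.sum_eq_zero
      intro v hv
      have hCv : C v = 0 := hg v (hver v hv) ⟨i, by
        rcases mem_vertices_iff.mp hv i with h | h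
        · rw [h, ht]
        · rw [h, ← hdeg, ht]⟩
      rw [hCv, mul_zero]
    rw [hz]
  · have htpos : 0 < R.lo i := lt_of_le_of_ne (hlo i).1 (Ne.symm ht)
    set R' : Box n := ⟨Function.update R.lo i 0, R.hi⟩ with hR'def
    have hlo_eq : R'.lo = Function.update R.lo i 0 := rfl
    have hhi_eq : R'.hi = R.hi := rfl
    have hlo' : inCube R'.lo := by
      intro i'
      rw [hlo_eq]
      by_cases h : i' = i
      · rw [h, Function.update_self]; exact ⟨le_refl 0, zero_le_one⟩
      · rw [Function.update_of_ne h]; exact hlo i'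
    have hle' : ∀ i', R'.lo i' ≤ R'.hi i' := by
      intro i'
      rw [hlo_eq, hhi_eq]
      by_cases h : i' = i
      · rw [h, Function.update_self]; exact (hhi i).1
      · rw [Function.update_of_ne h]; exact hle i'
    have hinotnd' : i ∉ nd R := hinotnd
    have hnd' : nd R' = insert i (nd R) := by
      ext i'
      simp only [nd, Finset.mem_filter, Finset.mem_univ, true_and, Finset.mem_insert,
        hlo_eq, hhi_eq]
      by_cases h : i' = i
      · rw [h, Function.update_self]
        constructor
        · intro _; exact Or.inl rfl
        · intro _; rw [← hdeg]; exact htpos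
      · rw [Function.update_of_ne h]
        constructor
        · exact fun h' => Or.inr h'
        · rintro (h' | h')
          · exact absurd h' h
          · exact h'
    have hcard' : (nd R').card = j + 1 := by
      rw [hnd', Finset.card_insert_of_notMem hinotnd, hcardnd]
    have hR'KB : R'.IsKBox (j+1) := ⟨hlo', hhi, hle', hcard'⟩
    have hver' : ∀ v ∈ R'.vertices, v ∈ cubeSet n := vertices_subset_cube hlo' hhi
    have hkey : Vvol (j+1) C R' = Vvol j C R := by
      rw [vvol_eq hR'KB C, vvol_eq ⟨hlo, hhi, hle, hcard⟩ C]
      rw [← Finset.sum_filter_add_sum_filter_not (Tset R') (fun ε => ε i = true)]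
      have hzero : ∑ ε ∈ (Tset R').filter (fun ε => ¬ ε i = true),
          ((-1:ℤ)^(fR R' ε):ℝ) * C (vertM R' ε) = 0 := by
        apply Finset.sum_eq_zero
        intro ε hε
        have hεi : ε i = false := by
          rcases Finset.mem_filter.mp hε with ⟨-, h⟩
          exact Bool.eq_false_iff.mpr h
        have hv0 : vertM R' ε i = 0 := by
          rw [vertM]
          simp only [hεi, Bool.false_eq_true, if_false, hlo_eq, Function.update_self]
        have hCz : C (vertM R' ε) = 0 :=
          hg _ (hver' _ (vertM_mem_vertices R' ε)) ⟨i, hv0⟩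
        rw [hCz, mul_zero]
      rw [hzero, add_zero]
      refine Finset.sum_bij' (fun ε _ => Function.update ε i false)
        (fun ε _ => Function.update ε i true) ?_ ?_ ?_ ?_ ?_
      · intro ε hε
        obtain ⟨hεT, hεi⟩ := Finset.mem_filter.mp hε
        rw [mem_Tset] at hεT ⊢
        intro i' hd'
        beta_reduce
        by_cases h : i' = i
        · rw [h, Function.update_self]
        · rw [Function.update_of_ne h]
          refine hεT i' ?_
          rw [hlo_eq, hhi_eq, Function.update_of_ne h]
          exact hd'
      · intro ε hε
        beta_reduce
        rw [mem_Tset] at hε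
        rw [Finset.mem_filter]
        constructor
        · rw [mem_Tset]
          intro i' hd'
          rw [hlo_eq, hhi_eq] at hd'
          by_cases h : i' = i
          · exfalso
            rw [h, Function.update_self] at hd'
            rw [← hdeg] at hd'
            exact ne_of_gt htpos hd'.symm
          · rw [Function.update_of_ne h]
            rw [Function.update_of_ne h] at hd'
            exact hε i' hd'
        · exact Function.update_self i true ε
      · intro ε hε
        beta_reduce
        obtain ⟨-, hεi⟩ := Finset.mem_filter.mp hε
        rw [Function.update_idem, ← hεi]
        exact Function.update_eq_self i ε
      · intro ε hε
        beta_reduce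
        rw [mem_Tset] at hε
        have hf : ε i = false := hε i hdeg
        rw [Function.update_idem, ← hf]
        exact Function.update_eq_self i ε
      · intro ε hε
        beta_reduce
        obtain ⟨hεT, hεi⟩ := Finset.mem_filter.mp hε
        have hvm : vertM R' ε = vertM R (Function.update ε i false) := by
          funext i'
          by_cases h : i' = i
          · rw [h, vertM, vertM]
            simp only [hεi, if_true, Function.update_self, Bool.false_eq_true, if_false,
              hhi_eq]
            exact hdeg.symm
          · rw [vertM, vertM]
            simp only [Function.update_of_ne h, hlo_eq, hhi_eq]
        have hfr : fR R' ε = fR R (Function.update ε i false) := by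
          rw [fR, fR, hnd', Finset.filter_insert]
          rw [if_neg (by simp [hεi])]
          congr 1
          apply Finset.filter_congr
          intro i' hi'
          have h : i' ≠ i := fun h => hinotnd (h ▸ hi')
          rw [Function.update_of_ne h]
        rw [hvm, hfr]
    rw [← hkey]
    exact hC R' hR'KB hver'

lemma kIncr_chain (C : Pt n → ℝ)
    (hg : ∀ u : Pt n, inCube u → (∃ i, u i = 0) → C u = 0)
    (k : ℕ) (hk1 : 1 ≤ k) (hkn : k ≤ n)
    (hC : KIncreasingOn k (cubeSet n) C) :
    KIncreasingOn 1 (cubeSet n) C := by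
  have H : ∀ m : ℕ, 1 ≤ k - m → KIncreasingOn (k - m) (cubeSet n) C := by
    intro m
    induction m with
    | zero => intro _; simpa using hC
    | succ m ih =>
      intro hm
      have hlt : k - (m+1) < n := by omega
      have heq : (k - (m+1)) + 1 = k - m := by omega
      have ihm : KIncreasingOn (k - m) (cubeSet n) C := ih (by omega)
      have := kIncr_down C hg (k - (m+1)) hlt (by rw [heq]; exact ihm)
      exact this
  have := H (k - 1) (by omega)
  have heq : k - (k - 1) = 1 := by omega
  rwa [heq] at this

lemma step_mono (C : Pt n → ℝ) (hC1 : KIncreasingOn 1 (cubeSet n) C)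
    (x : Pt n) (hx : inCube x) (i : Fin n) (r : ℝ) (hr : x i ≤ r) (hr1 : r ≤ 1) :
    C x ≤ C (Function.update x i r) := by
  rcases eq_or_lt_of_le hr with heq | hlt
  · rw [← heq, Function.update_eq_self]
  set R : Box n := ⟨x, Function.update x i r⟩ with hRdef
  have hlo_eq : R.lo = x := rfl
  have hhi_eq : R.hi = Function.update x i r := rfl
  have hhicube : inCube R.hi := by
    intro i'
    rw [hhi_eq]
    by_cases h : i' = i
    · rw [h, Function.update_self]
      exact ⟨le_trans (hx i).1 hr, hr1⟩
    · rw [Function.update_of_ne h]; exact hx i'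
  have hle : ∀ i', R.lo i' ≤ R.hi i' := by
    intro i'
    rw [hlo_eq, hhi_eq]
    by_cases h : i' = i
    · rw [h, Function.update_self]; exact hr
    · rw [Function.update_of_ne h]
  have hndR : nd R = {i} := by
    ext i'
    simp only [nd, Finset.mem_filter, Finset.mem_univ, true_and, Finset.mem_singleton,
      hlo_eq, hhi_eq]
    by_cases h : i' = i
    · rw [h, Function.update_self]
      exact ⟨fun _ => rfl, fun _ => hlt⟩
    · rw [Function.update_of_ne h]
      exact ⟨fun h' => absurd h' (lt_irrefl _), fun h' => absurd h' h⟩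
  have hRKB : R.IsKBox 1 := ⟨hx, hhicube, hle, by rw [show (Finset.univ.filter
    (fun i' => R.lo i' < R.hi i')) = nd R from rfl, hndR, Finset.card_singleton]⟩
  have hver : ∀ v ∈ R.vertices, v ∈ cubeSet n := vertices_subset_cube hx hhicube
  have hV := hC1 R hRKB hver
  rw [vvol_eq hRKB C] at hV
  -- Tset R = {const false, update const false i true}
  have hTset : Tset R = {fun _ => false, Function.update (fun _ => false) i true} := by
    ext ε
    rw [mem_Tset]
    simp only [Finset.mem_insert, Finset.mem_singleton]
    constructor
    · intro hε
      by_cases h : ε i = true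
      · right
        funext i'
        by_cases h' : i' = i
        · rw [h', Function.update_self]; exact h
        · rw [Function.update_of_ne h']
          exact hε i' (show x i' = Function.update x i r i' by
            rw [Function.update_of_ne h'])
      · left
        funext i'
        by_cases h' : i' = i
        · rw [h']; exact Bool.eq_false_iff.mpr h
        · exact hε i' (show x i' = Function.update x i r i' by
            rw [Function.update_of_ne h'])
    · intro hε i' hd'
      have hd2 : x i' = Function.update x i r i' := hd'
      have hne : i' ≠ i := by
        intro h'
        rw [h', Function.update_self] at hd2
        exact ne_of_lt hlt hd2
      rcases hε with rfl | rfl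
      · rfl
      · rw [Function.update_of_ne hne]
  have hne2 : (fun _ => false : Fin n → Bool) ≠ Function.update (fun _ => false) i true := by
    intro h
    have := congrFun h i
    rw [Function.update_self] at this
    exact Bool.false_ne_true this
  rw [hTset, Finset.sum_pair hne2] at hV
  have h1 : fR R (fun _ => false) = 1 := by
    rw [fR, hndR, Finset.filter_singleton, if_pos rfl, Finset.card_singleton]
  have h2 : fR R (Function.update (fun _ => false) i true) = 0 := by
    rw [fR, hndR, Finset.filter_singleton, if_neg (by simp), Finset.card_empty]
  have hv0 : vertM R (fun _ => false) = x := by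
    funext i'
    rfl
  have hv1 : vertM R (Function.update (fun _ => false) i true) = Function.update x i r := by
    funext i'
    show (if Function.update (fun _ => false) i true i' then R.hi i' else R.lo i')
      = Function.update x i r i'
    by_cases h : i' = i
    · rw [h, Function.update_self, if_pos rfl]
    · rw [Function.update_of_ne h, Function.update_of_ne h]
      rfl
  rw [h1, h2, hv0, hv1] at hV
  push_cast at hV
  linarith

lemma oneIncr (C : Pt n → ℝ) (hC1 : KIncreasingOn 1 (cubeSet n) C) :
    OneIncreasing C := by
  intro x y hx hy hxy
  have key : ∀ s : Finset (Fin n), C x ≤ C (s.piecewise y x) := by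
    intro s
    induction s using Finset.induction_on with
    | empty => rw [Finset.piecewise_empty]
    | insert _ _ hnotmem ih =>
      rename_i i s
      rw [Finset.piecewise_insert]
      have hz : inCube (s.piecewise y x) := by
        intro i'
        by_cases h : i' ∈ s
        · rw [Finset.piecewise_eq_of_mem _ _ _ h]; exact hy i'
        · rw [Finset.piecewise_eq_of_notMem _ _ _ h]; exact hx i'
      have hzi : s.piecewise y x i = x i := Finset.piecewise_eq_of_notMem _ _ _ hnotmem
      have hstep := step_mono C hC1 (s.piecewise y x) hz i (y i)
        (by rw [hzi]; exact hxy i) (hy i).2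
      exact le_trans ih hstep
  have := key Finset.univ
  rwa [Finset.piecewise_univ] at this

/-- lower bound function for the LP -/
noncomputable def lf (A : Pt n → ℝ) (u : Pt n) : ℝ := if inCube u then A u else 0
/-- upper bound function for the LP, pinned at `x₀` -/
noncomputable def hf (A B : Pt n → ℝ) (x₀ u : Pt n) : ℝ :=
  if u = x₀ then A x₀ else if inCube u then B u else 0

/-- finite Farkas step -/
lemma farkas (k : ℕ) (A B : Pt n → ℝ) (x₀ : Pt n) (hx₀ : inCube x₀)
    (hAB : ∀ x, inCube x → A x ≤ B x)
    (hL : ∀ DU : Multiset (Box n), memRk k (cubeSet n) DU → 0 ≤ Lk k A B DU)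
    (hP : ∀ DU : Multiset (Box n), memRk k (cubeSet n) DU → 0 < multDU k DU x₀ →
          (multDU k DU x₀ : ℝ) * (B x₀ - A x₀) ≤ Lk k A B DU)
    (G : Finset (Box n)) (hG : ∀ R ∈ G, R.IsKBox k ∧ ∀ v ∈ R.vertices, v ∈ cubeSet n) :
    ∃ c : Pt n → ℝ, (∀ u, c u ∈ Set.Icc (lf A u) (hf A B x₀ u)) ∧
      ∀ R ∈ G, 0 ≤ Vvol k c R := by
  classical
  by_contra hcon
  push_neg at hcon
  -- notation
  set ℓ' : Pt n → ℝ := lf A with hldef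
  set h' : Pt n → ℝ := hf A B x₀ with hhdef
  have hlh : ∀ u, ℓ' u ≤ h' u := by
    intro u
    rw [hldef, hhdef, lf, hf]
    by_cases hux : u = x₀
    · rw [if_pos hux, hux, if_pos hx₀]
    · rw [if_neg hux]
      by_cases hc : inCube u
      · rw [if_pos hc, if_pos hc]; exact hAB u hc
      · rw [if_neg hc, if_neg hc]
  set K : Set (Pt n → ℝ) := Set.univ.pi (fun u => Set.Icc (ℓ' u) (h' u)) with hKdef
  have hKmem : ∀ c : Pt n → ℝ, c ∈ K ↔ ∀ u, c u ∈ Set.Icc (ℓ' u) (h' u) := by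
    intro c; rw [hKdef]; exact Set.mem_univ_pi
  set φ : (Pt n → ℝ) →ₗ[ℝ] (↥G → ℝ) :=
    LinearMap.pi (fun j : ↥G => ∑ v ∈ (j : Box n).vertices,
      ((Box.sign k (j : Box n) v : ℝ)) • LinearMap.proj v) with hφdef
  have hφval : ∀ (c : Pt n → ℝ) (j : ↥G), φ c j = Vvol k c (j : Box n) := by
    intro c j
    rw [hφdef, Vvol]
    simp [LinearMap.pi_apply, LinearMap.sum_apply, LinearMap.smul_apply,
      LinearMap.proj_apply, smul_eq_mul]
  have hKcpt : IsCompact K := by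
    rw [hKdef]; exact isCompact_univ_pi (fun u => isCompact_Icc)
  have hKconv : Convex ℝ K := by
    rw [hKdef]; exact convex_pi (fun u _ => convex_Icc _ _)
  have hφcont : Continuous (fun c : Pt n → ℝ => φ c) := by
    apply continuous_pi
    intro j
    have heq : (fun c : Pt n → ℝ => φ c j)
        = fun c => ∑ v ∈ (j : Box n).vertices, ((Box.sign k (j : Box n) v : ℝ)) * c v :=
      funext (fun c => by rw [hφval, Vvol])
    rw [heq]
    exact continuous_finset_sum _ (fun v _ => continuous_const.mul (continuous_apply v))
  set t : Set (↥G → ℝ) := Set.univ.pi (fun _ => Set.Ici (0:ℝ)) with htdef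
  have ht_closed : IsClosed t := by
    rw [htdef]; exact isClosed_set_pi (fun _ _ => isClosed_Ici)
  have ht_conv : Convex ℝ t := by
    rw [htdef]; exact convex_pi (fun _ _ => convex_Ici 0)
  have hdisj : Disjoint (φ '' K) t := by
    rw [Set.disjoint_left]
    rintro y ⟨c, hcK, rfl⟩ hyt
    obtain ⟨R, hRG, hRneg⟩ := hcon c ((hKmem c).mp hcK)
    have h1 : (0:ℝ) ≤ φ c ⟨R, hRG⟩ := by
      rw [htdef] at hyt
      exact Set.mem_univ_pi.mp hyt ⟨R, hRG⟩
    rw [hφval] at h1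
    exact absurd h1 (not_le.mpr hRneg)
  obtain ⟨f, uu, vv, hfu, huv, hvt⟩ := geometric_hahn_banach_compact_closed
    (hKconv.linear_image φ) (hKcpt.image hφcont) ht_conv ht_closed hdisj
  have hv0 : vv < 0 := by
    have h0t : (0 : ↥G → ℝ) ∈ t := by
      rw [htdef]; exact Set.mem_univ_pi.mpr (fun x => Set.mem_Ici.mpr (le_refl _))
    have := hvt 0 h0t
    rwa [map_zero] at this
  set lam : ↥G → ℝ := fun j => f (fun j' => if j = j' then 1 else 0) with hlam
  have hlam0 : ∀ j, 0 ≤ lam j := by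
    intro j
    by_contra hneg
    push_neg at hneg
    set b : ↥G → ℝ := (vv / lam j) • ((fun j' => if j = j' then (1:ℝ) else 0) : ↥G → ℝ) with hb
    have hvl : 0 ≤ vv / lam j := le_of_lt (div_pos_of_neg_of_neg hv0 hneg)
    have hbt : b ∈ t := by
      rw [htdef]
      refine Set.mem_univ_pi.mpr (fun j' => ?_)
      rw [hb]
      simp only [Pi.smul_apply, smul_eq_mul]
      by_cases h : j = j'
      · rw [if_pos h, mul_one]; exact hvl
      · rw [if_neg h, mul_zero]; exact Set.mem_Ici.mpr (le_refl 0)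
    have hlt := hvt b hbt
    rw [hb, map_smul, smul_eq_mul] at hlt
    have hfj : f (fun j' => if j = j' then 1 else 0) = lam j := rfl
    rw [div_mul_cancel₀ vv (ne_of_lt hneg)] at hlt
    exact lt_irrefl vv hlt
  have hrep : ∀ y : ↥G → ℝ, f y = ∑ j, y j * lam j := by
    intro y
    have h1 := LinearMap.pi_apply_eq_sum_univ (f.toLinearMap) y
    rw [ContinuousLinearMap.coe_coe] at h1
    rw [h1]
    apply Finset.sum_congr rfl
    intro j _
    rw [smul_eq_mul]
  set U : Finset (Pt n) := G.biUnion Box.vertices ∪ {x₀} with hUdef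
  have hx₀U : x₀ ∈ U := by
    rw [hUdef]; exact Finset.mem_union_right _ (Finset.mem_singleton_self x₀)
  have hUcube : ∀ u ∈ U, inCube u := by
    intro u hu
    rw [hUdef, Finset.mem_union] at hu
    rcases hu with hu | hu
    · rw [Finset.mem_biUnion] at hu
      obtain ⟨R, hR, hv⟩ := hu
      exact (hG R hR).2 u hv
    · rw [Finset.mem_singleton] at hu
      rw [hu]; exact hx₀
  have hsubU : ∀ j : ↥G, (j : Box n).vertices ⊆ U := by
    intro j v hv
    rw [hUdef]
    exact Finset.mem_union_left _ (Finset.mem_biUnion.mpr ⟨(j : Box n), j.2, hv⟩)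
  set aC : (↥G → ℝ) → Pt n → ℝ :=
    fun μ u => ∑ j, μ j * ((Box.mult k (j : Box n) u : ℤ) : ℝ) with haCdef
  have hkey : ∀ c : Pt n → ℝ, f (φ c) = ∑ u ∈ U, aC lam u * c u := by
    intro c
    rw [hrep]
    have h1 : ∀ j : ↥G, φ c j * lam j
        = ∑ u ∈ U, lam j * ((Box.mult k (j : Box n) u : ℝ) * c u) := by
      intro j
      rw [hφval, ← sum_mult_mul k (j : Box n) c U (hsubU j), Finset.sum_mul]
      apply Finset.sum_congr rfl
      intro u _
      ring
    rw [Finset.sum_congr rfl (fun j _ => h1 j), Finset.sum_comm]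
    apply Finset.sum_congr rfl
    intro u _
    rw [haCdef]
    beta_reduce
    rw [Finset.sum_mul]
    apply Finset.sum_congr rfl
    intro j _
    ring
  set cstar : Pt n → ℝ := fun u => if 0 ≤ aC lam u then h' u else ℓ' u with hcstar
  have hcstarK : cstar ∈ K := by
    refine (hKmem _).mpr (fun u => ?_)
    rw [hcstar]
    beta_reduce
    by_cases hs : 0 ≤ aC lam u
    · rw [if_pos hs]; exact ⟨hlh u, le_refl _⟩
    · rw [if_neg hs]; exact ⟨le_refl _, hlh u⟩
  set Θ : (↥G → ℝ) → ℝ := fun μ => ∑ u ∈ U, max (aC μ u * h' u) (aC μ u * ℓ' u) with hΘdef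
  have hΘlam : Θ lam = f (φ cstar) := by
    rw [hΘdef, hkey cstar]
    apply Finset.sum_congr rfl
    intro u _
    rw [hcstar]
    beta_reduce
    by_cases hs : 0 ≤ aC lam u
    · rw [if_pos hs, max_eq_left (mul_le_mul_of_nonneg_left (hlh u) hs)]
    · have hs' : aC lam u ≤ 0 := le_of_not_ge hs
      rw [if_neg hs, max_eq_right (mul_le_mul_of_nonpos_left (hlh u) hs')]
  have hΘneg : Θ lam < 0 := by
    have h2 := hfu (φ cstar) ⟨cstar, hcstarK, rfl⟩
    rw [hΘlam]
    linarith
  have haCcont : ∀ u, Continuous (fun μ : ↥G → ℝ => aC μ u) := by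
    intro u
    rw [haCdef]
    exact continuous_finset_sum _ (fun j _ => (continuous_apply j).mul continuous_const)
  have hΘcont : Continuous Θ := by
    rw [hΘdef]
    exact continuous_finset_sum _ (fun u _ =>
      Continuous.max ((haCcont u).mul continuous_const) ((haCcont u).mul continuous_const))
  obtain ⟨δ, hδpos, hδ⟩ : ∃ δ > 0, ∀ μ, dist μ lam < δ → Θ μ < 0 := by
    have hopen : IsOpen {μ : ↥G → ℝ | Θ μ < 0} := isOpen_lt hΘcont continuous_const
    obtain ⟨δ, hδ, hsubset⟩ := Metric.isOpen_iff.mp hopen lam hΘneg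
    exact ⟨δ, hδ, fun μ hμ => hsubset (Metric.mem_ball.mpr hμ)⟩
  obtain ⟨M, hM⟩ := exists_nat_gt (1/δ)
  have hMpos : (0:ℝ) < M := lt_trans (by positivity) hM
  set nn : ↥G → ℕ := fun j => ⌈lam j * M⌉₊ with hnn
  set μ : ↥G → ℝ := fun j => (nn j : ℝ) / M with hμdef
  have h1M : 1/(M:ℝ) < δ := by
    rw [div_lt_iff₀ hMpos]
    calc (1:ℝ) = δ * (1/δ) := by field_simp
    _ < δ * M := by exact mul_lt_mul_of_pos_left hM hδpos
  have hdist : dist μ lam < δ := by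
    rw [dist_pi_lt_iff hδpos]
    intro j
    rw [Real.dist_eq]
    have hc1 : lam j * M ≤ (nn j : ℝ) := Nat.le_ceil _
    have hc2 : (nn j : ℝ) < lam j * M + 1 :=
      Nat.ceil_lt_add_one (mul_nonneg (hlam0 j) (le_of_lt hMpos))
    have ha : lam j ≤ μ j := by
      rw [hμdef]; beta_reduce
      rw [le_div_iff₀ hMpos]
      exact hc1
    have hb2 : μ j < lam j + 1/M := by
      rw [hμdef]; beta_reduce
      rw [div_lt_iff₀ hMpos, add_mul, one_div, inv_mul_cancel₀ (ne_of_gt hMpos)]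
      exact hc2
    rw [abs_of_nonneg (by linarith)]
    linarith
  have hhom : Θ (fun j => (nn j : ℝ)) = M * Θ μ := by
    rw [hΘdef]
    beta_reduce
    rw [Finset.mul_sum]
    apply Finset.sum_congr rfl
    intro u _
    have haCh : aC (fun j => (nn j:ℝ)) u = M * aC μ u := by
      rw [haCdef]
      beta_reduce
      rw [Finset.mul_sum]
      apply Finset.sum_congr rfl
      intro j _
      rw [hμdef]
      beta_reduce
      field_simp
    rw [haCh, mul_assoc, mul_assoc, mul_max_of_nonneg _ _ (le_of_lt hMpos)]
  have hΘnn : Θ (fun j => (nn j : ℝ)) < 0 := by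
    rw [hhom]
    exact mul_neg_of_pos_of_neg hMpos (hδ μ hdist)
  -- build the multiset
  set DU : Multiset (Box n) := ∑ j : ↥G, Multiset.replicate (nn j) (j : Box n) with hDUdef
  have hDUmem : memRk k (cubeSet n) DU := by
    intro R hR
    rw [hDUdef, Multiset.mem_sum] at hR
    obtain ⟨j, -, hj⟩ := hR
    rw [Multiset.eq_of_mem_replicate hj]
    exact hG _ j.2
  have hmultDU : ∀ u, (multDU k DU u : ℝ) = aC (fun j => (nn j:ℝ)) u := by
    intro u
    have h1 : ∀ (s : Finset ↥G),
        ((∑ j ∈ s, Multiset.replicate (nn j) ((j:Box n))).map (fun R => Box.mult k R u)).sum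
        = ∑ j ∈ s, (nn j : ℤ) * Box.mult k (j : Box n) u := by
      intro s
      induction s using Finset.induction_on with
      | empty => simp
      | insert _ _ hnotmem ih =>
        rename_i j s
        rw [Finset.sum_insert hnotmem, Multiset.map_add, Multiset.sum_add, ih,
          Finset.sum_insert hnotmem, Multiset.map_replicate, Multiset.sum_replicate,
          nsmul_eq_mul]
    rw [multDU, hDUdef, h1 Finset.univ, haCdef]
    beta_reduce
    push_cast
    rfl
  set F := DU.toFinset.biUnion Box.vertices with hFdef
  have hFU : F ⊆ U := by
    intro u hu
    rw [hFdef, Finset.mem_biUnion] at hu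
    obtain ⟨R, hR, hv⟩ := hu
    have hRDU := Multiset.mem_toFinset.mp hR
    rw [hDUdef, Multiset.mem_sum] at hRDU
    obtain ⟨j, -, hj⟩ := hRDU
    rw [Multiset.eq_of_mem_replicate hj] at hv
    exact hsubU j hv
  have hLkU : Lk k A B DU = ∑ u ∈ U,
      (if 0 < multDU k DU u then (multDU k DU u : ℝ) * B u
       else if multDU k DU u < 0 then (multDU k DU u : ℝ) * A u else 0) := by
    rw [Lk]
    apply Finset.sum_subset hFU
    intro u _ hnF
    rw [multDU_eq_zero_of_not_mem k DU u hnF]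
    norm_num
  have hΘU : Θ (fun j => (nn j:ℝ)) = ∑ u ∈ U,
      max ((multDU k DU u : ℝ) * h' u) ((multDU k DU u : ℝ) * ℓ' u) := by
    rw [hΘdef]
    beta_reduce
    apply Finset.sum_congr rfl
    intro u _
    rw [hmultDU u]
  have hterm : ∀ u ∈ U, u ≠ x₀ →
      max ((multDU k DU u : ℝ) * h' u) ((multDU k DU u : ℝ) * ℓ' u)
      = (if 0 < multDU k DU u then (multDU k DU u : ℝ) * B u
         else if multDU k DU u < 0 then (multDU k DU u : ℝ) * A u else 0) := by
    intro u hu hux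
    have hcube : inCube u := hUcube u hu
    have hh1 : h' u = B u := by rw [hhdef, hf, if_neg hux, if_pos hcube]
    have hl1 : ℓ' u = A u := by rw [hldef, lf, if_pos hcube]
    rw [hh1, hl1]
    rcases lt_trichotomy (multDU k DU u) 0 with h | h | h
    · rw [if_neg (by omega), if_pos h]
      apply max_eq_right
      have hc : (multDU k DU u : ℝ) ≤ 0 := by exact_mod_cast h.le
      exact mul_le_mul_of_nonpos_left (hAB u hcube) hc
    · rw [h]
      norm_num
    · rw [if_pos h]
      apply max_eq_left
      have hc : (0:ℝ) ≤ (multDU k DU u : ℝ) := by exact_mod_cast h.le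
      exact mul_le_mul_of_nonneg_left (hAB u hcube) hc
  have hx0term : max ((multDU k DU x₀ : ℝ) * h' x₀) ((multDU k DU x₀ : ℝ) * ℓ' x₀)
      = (multDU k DU x₀ : ℝ) * A x₀ := by
    have hh1 : h' x₀ = A x₀ := by rw [hhdef, hf, if_pos rfl]
    have hl1 : ℓ' x₀ = A x₀ := by rw [hldef, lf, if_pos hx₀]
    rw [hh1, hl1, max_self]
  have herase : ∑ u ∈ U.erase x₀,
      max ((multDU k DU u : ℝ) * h' u) ((multDU k DU u : ℝ) * ℓ' u)
      = ∑ u ∈ U.erase x₀,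
      (if 0 < multDU k DU u then (multDU k DU u : ℝ) * B u
       else if multDU k DU u < 0 then (multDU k DU u : ℝ) * A u else 0) :=
    Finset.sum_congr rfl (fun u hu =>
      hterm u (Finset.mem_of_mem_erase hu) (Finset.ne_of_mem_erase hu))
  have hx0L : (if 0 < multDU k DU x₀ then (multDU k DU x₀ : ℝ) * B x₀
       else if multDU k DU x₀ < 0 then (multDU k DU x₀ : ℝ) * A x₀ else 0)
      = (if 0 < multDU k DU x₀ then (multDU k DU x₀ : ℝ) * (B x₀ - A x₀) else 0)
        + (multDU k DU x₀ : ℝ) * A x₀ := by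
    rcases lt_trichotomy (multDU k DU x₀) 0 with h | h | h
    · rw [if_neg (by omega), if_pos h, if_neg (by omega), zero_add]
    · rw [h]
      norm_num
    · rw [if_pos h, if_pos h]
      ring
  have hfinal : Lk k A B DU
      = (if 0 < multDU k DU x₀ then (multDU k DU x₀ : ℝ) * (B x₀ - A x₀) else 0)
        + Θ (fun j => (nn j:ℝ)) := by
    rw [hLkU, hΘU,
      ← Finset.add_sum_erase U _ hx₀U, ← Finset.add_sum_erase U _ hx₀U,
      herase, hx0term, hx0L]
    ring
  by_cases hm : 0 < multDU k DU x₀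
  · have hPl := hP DU hDUmem hm
    rw [hfinal, if_pos hm] at hPl
    linarith
  · have hLl := hL DU hDUmem
    rw [hfinal, if_neg hm] at hLl
    linarith

/-- main construction for the forward direction -/
lemma exists_C (k : ℕ) (hk1 : 1 ≤ k) (hkn : k ≤ n) (A B : Pt n → ℝ)
    (hA : Standardized A) (hB : Standardized B) (hAI : MapsToI A) (hBI : MapsToI B)
    (hAB : ∀ x, inCube x → A x ≤ B x)
    (hL : ∀ DU : Multiset (Box n), memRk k (cubeSet n) DU → 0 ≤ Lk k A B DU)
    (x₀ : Pt n) (hx₀ : inCube x₀)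
    (hP : ∀ DU : Multiset (Box n), memRk k (cubeSet n) DU → 0 < multDU k DU x₀ →
          (multDU k DU x₀ : ℝ) * (B x₀ - A x₀) ≤ Lk k A B DU) :
    ∃ C : Pt n → ℝ, MapsToI C ∧ Standardized C ∧ KIncreasingOn k (cubeSet n) C ∧
      (∀ u : Pt n, inCube u → A u ≤ C u ∧ C u ≤ B u) ∧ C x₀ = A x₀ := by
  classical
  set ℓ' : Pt n → ℝ := lf A with hldef
  set h' : Pt n → ℝ := hf A B x₀ with hhdef
  set K : Set (Pt n → ℝ) := Set.univ.pi (fun u => Set.Icc (ℓ' u) (h' u)) with hKdef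
  have hKcpt : IsCompact K := by
    rw [hKdef]; exact isCompact_univ_pi (fun u => isCompact_Icc)
  set ι' := {R : Box n // R.IsKBox k ∧ ∀ v ∈ R.vertices, v ∈ cubeSet n} with hι'
  set Z : ι' → Set (Pt n → ℝ) := fun R => {c | 0 ≤ Vvol k c (R : Box n)} with hZdef
  have hZclosed : ∀ R : ι', IsClosed (Z R) := by
    intro R
    rw [hZdef]
    apply isClosed_le continuous_const
    exact continuous_finset_sum _ (fun v _ => continuous_const.mul (continuous_apply v))
  have hFIP : ∀ s : Finset ι', (K ∩ ⋂ i ∈ s, Z i).Nonempty := by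
    intro s
    obtain ⟨c, hc1, hc2⟩ := farkas k A B x₀ hx₀ hAB hL hP (s.image Subtype.val)
      (by
        intro R hR
        rw [Finset.mem_image] at hR
        obtain ⟨j, -, rfl⟩ := hR
        exact j.2)
    refine ⟨c, ?_, ?_⟩
    · rw [hKdef]; exact Set.mem_univ_pi.mpr hc1
    · rw [Set.mem_iInter₂]
      intro i hi
      rw [hZdef]
      exact hc2 (i : Box n) (Finset.mem_image_of_mem _ hi)
  obtain ⟨C, hCK, hCZ⟩ := hKcpt.inter_iInter_nonempty Z hZclosed hFIP
  have hbounds : ∀ u, C u ∈ Set.Icc (ℓ' u) (h' u) := by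
    rw [hKdef] at hCK
    exact Set.mem_univ_pi.mp hCK
  have hCx₀ : C x₀ = A x₀ := by
    have h1 := (hbounds x₀).1
    have h2 := (hbounds x₀).2
    rw [hldef, lf, if_pos hx₀] at h1
    rw [hhdef, hf, if_pos rfl] at h2
    linarith
  have hsand : ∀ u : Pt n, inCube u → A u ≤ C u ∧ C u ≤ B u := by
    intro u hu
    have h1 := (hbounds u).1
    have h2 := (hbounds u).2
    rw [hldef, lf, if_pos hu] at h1
    rw [hhdef, hf] at h2
    constructor
    · exact h1
    · by_cases hux : u = x₀
      · rw [if_pos hux] at h2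
        rw [hux] at h2 ⊢
        exact le_trans h2 (hAB x₀ hx₀)
      · rw [if_neg hux, if_pos hu] at h2
        exact h2
  have hKinc : KIncreasingOn k (cubeSet n) C := by
    intro R hR hver
    have := Set.mem_iInter.mp hCZ (⟨R, hR, hver⟩ : ι')
    rw [hZdef] at this
    exact this
  have hgr : ∀ u : Pt n, inCube u → (∃ i, u i = 0) → C u = 0 := by
    intro u hu hz
    have hAu : A u = 0 := hA.1 u hu hz
    have hBu : B u = 0 := hB.1 u hu hz
    obtain ⟨h1, h2⟩ := hsand u hu
    rw [hAu] at h1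
    rw [hBu] at h2
    linarith
  have hone : C (fun _ => (1:ℝ)) = 1 := by
    have hcube1 : inCube (fun _ : Fin n => (1:ℝ)) := by
      intro i
      norm_num
    obtain ⟨h1, h2⟩ := hsand _ hcube1
    rw [hA.2.2] at h1
    have hB1 : B (fun _ => (1:ℝ)) ≤ 1 := (hBI _ hcube1).2
    linarith
  have hmono : OneIncreasing C := oneIncr C (kIncr_chain C hgr k hk1 hkn hKinc)
  refine ⟨C, ?_, ⟨hgr, hmono, hone⟩, hKinc, hsand, hCx₀⟩
  intro u hu
  obtain ⟨h1, h2⟩ := hsand u hu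
  constructor
  · exact le_trans (hAI u hu).1 h1
  · exact le_trans h2 (hBI u hu).2

lemma Ppos_nonneg (k : ℕ) (A B : Pt n → ℝ)
    (hL : ∀ DU : Multiset (Box n), memRk k (cubeSet n) DU → 0 ≤ Lk k A B DU) (x : Pt n) :
    0 ≤ Ppos k (cubeSet n) A B x := by
  rw [Ppos]
  rcases Set.eq_empty_or_nonempty {r : ℝ | ∃ DU : Multiset (Box n),
      memRk k (cubeSet n) DU ∧ 0 < multDU k DU x ∧
      r = Lk k A B DU / |(multDU k DU x : ℝ)|} with he | hne
  · rw [he, Real.sInf_empty]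
  · apply le_csInf hne
    rintro r ⟨DU, h1, h2, rfl⟩
    exact div_nonneg (hL DU h1) (abs_nonneg _)

lemma Lk_ge_of_Ppos (k : ℕ) (A B : Pt n → ℝ)
    (hL : ∀ DU : Multiset (Box n), memRk k (cubeSet n) DU → 0 ≤ Lk k A B DU)
    (x : Pt n)
    (hPx : B x - A x ≤ Ppos k (cubeSet n) A B x) :
    ∀ DU : Multiset (Box n), memRk k (cubeSet n) DU → 0 < multDU k DU x →
      (multDU k DU x : ℝ) * (B x - A x) ≤ Lk k A B DU := by
  intro DU hDU hm
  rw [Ppos] at hPx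
  have hbdd : BddBelow {r : ℝ | ∃ DU : Multiset (Box n),
      memRk k (cubeSet n) DU ∧ 0 < multDU k DU x ∧
      r = Lk k A B DU / |(multDU k DU x : ℝ)|} := by
    refine ⟨0, ?_⟩
    rintro r ⟨DU', h1, h2, rfl⟩
    exact div_nonneg (hL DU' h1) (abs_nonneg _)
  have hmem : Lk k A B DU / |(multDU k DU x : ℝ)| ∈ {r : ℝ | ∃ DU : Multiset (Box n),
      memRk k (cubeSet n) DU ∧ 0 < multDU k DU x ∧
      r = Lk k A B DU / |(multDU k DU x : ℝ)|} := ⟨DU, hDU, hm, rfl⟩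
  have h1 : B x - A x ≤ Lk k A B DU / |(multDU k DU x : ℝ)| :=
    le_trans hPx (csInf_le hbdd hmem)
  have hmpos : (0:ℝ) < (multDU k DU x : ℝ) := by exact_mod_cast hm
  rw [abs_of_pos hmpos, le_div_iff₀ hmpos] at h1
  linarith

lemma exists_DU_pos (k : ℕ) (hkn : k ≤ n) (x : Pt n) (hx : inCube x)
    (hpos : ∀ i, 0 < x i) :
    ∃ DU : Multiset (Box n), memRk k (cubeSet n) DU ∧ multDU k DU x = 1 := by
  obtain ⟨ch, -, hch_card⟩ := Finset.exists_subset_card_eq (s := (Finset.univ : Finset (Fin n))) (n := k)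
    (by rw [Finset.card_univ, Fintype.card_fin]; exact hkn)
  set R : Box n := ⟨fun i => if i ∈ ch then x i / 2 else x i, x⟩ with hRdef
  have hlo_val : ∀ i, R.lo i = if i ∈ ch then x i / 2 else x i := fun _ => rfl
  have hlo : inCube R.lo := by
    intro i
    rw [hlo_val]
    by_cases h : i ∈ ch
    · rw [if_pos h]
      constructor
      · exact div_nonneg (hx i).1 (by norm_num)
      · calc x i / 2 ≤ x i := half_le_self (hx i).1
        _ ≤ 1 := (hx i).2
    · rw [if_neg h]; exact hx i
  have hle : ∀ i, R.lo i ≤ R.hi i := by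
    intro i
    show (if i ∈ ch then x i / 2 else x i) ≤ x i
    by_cases h : i ∈ ch
    · rw [if_pos h]; exact half_le_self (hx i).1
    · rw [if_neg h]
  have hfil : Finset.univ.filter (fun i => R.lo i < R.hi i) = ch := by
    ext i
    simp only [Finset.mem_filter, Finset.mem_univ, true_and]
    show (if i ∈ ch then x i / 2 else x i) < x i ↔ i ∈ ch
    by_cases h : i ∈ ch
    · rw [if_pos h]; exact iff_of_true (half_lt_self (hpos i)) h
    · rw [if_neg h]; exact iff_of_false (lt_irrefl _) h
  have hKB : R.IsKBox k := ⟨hlo, hx, hle, by rw [hfil]; exact hch_card⟩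
  have hver : ∀ v ∈ R.vertices, v ∈ cubeSet n := vertices_subset_cube hlo hx
  have hvx : R.IsVertex x := fun i => Or.inr rfl
  have hsign : R.sign k x = 1 := by
    rw [Box.sign]
    have hfil2 : Finset.univ.filter (fun i => x i = R.lo i) = chᶜ := by
      ext i
      simp only [Finset.mem_filter, Finset.mem_univ, true_and, Finset.mem_compl]
      show (x i = if i ∈ ch then x i / 2 else x i) ↔ i ∉ ch
      by_cases h : i ∈ ch
      · rw [if_pos h]
        apply iff_of_false _ (by simp [h])
        intro he
        have hx0 : x i = 0 := by linarith
        exact ne_of_gt (hpos i) hx0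
      · rw [if_neg h]; exact iff_of_true rfl h
    rw [hfil2, Finset.card_compl, hch_card, Fintype.card_fin]
    exact Even.neg_one_pow ⟨n - k, rfl⟩
  refine ⟨{R}, ?_, ?_⟩
  · intro R' hR'
    rw [Multiset.mem_singleton] at hR'
    rw [hR']
    exact ⟨hKB, hver⟩
  · rw [multDU, Multiset.map_singleton, Multiset.sum_singleton, Box.mult, if_pos hvx, hsign]

end KAux

open KAux
/-- Theorem 8.3: coherence at the lower bound for standardized
functions. -/
theorem stmt19 (n k : ℕ) (hn : 1 ≤ n) (hk1 : 1 ≤ k) (hkn : k ≤ n)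
    (A B : Pt n → ℝ) (hA : Standardized A) (hB : Standardized B)
    (hAI : MapsToI A) (hBI : MapsToI B)
    (hAB : ∀ x : Pt n, inCube x → A x ≤ B x)
    (S : Set ℝ) (hS : S.Countable) (hSsub : S ⊆ Set.Icc (0:ℝ) 1)
    (hCondS : CondS A S ∨ CondS B S)
    (hL : ∀ DU : Multiset (Box n), memRk k (cubeSet n) DU → 0 ≤ Lk k A B DU) :
    (∀ x : Pt n, inCube x → B x - A x ≤ Ppos k (cubeSet n) A B x) ↔
    (∀ x : Pt n, inCube x →
      A x = sInf {y : ℝ | ∃ C : Pt n → ℝ, MapsToI C ∧ Standardized C ∧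
        KIncreasingOn k (cubeSet n) C ∧
        (∀ u : Pt n, inCube u → A u ≤ C u ∧ C u ≤ B u) ∧ y = C x}) := by
  constructor
  · -- forward direction
    intro hPp x hx
    have hP := Lk_ge_of_Ppos k A B hL x (hPp x hx)
    obtain ⟨C, hC1, hC2, hC3, hC4, hC5⟩ :=
      exists_C k hk1 hkn A B hA hB hAI hBI hAB hL x hx hP
    have hmem : A x ∈ {y : ℝ | ∃ C : Pt n → ℝ, MapsToI C ∧ Standardized C ∧
        KIncreasingOn k (cubeSet n) C ∧
        (∀ u : Pt n, inCube u → A u ≤ C u ∧ C u ≤ B u) ∧ y = C x} :=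
      ⟨C, hC1, hC2, hC3, hC4, hC5.symm⟩
    have hlb : ∀ y ∈ {y : ℝ | ∃ C : Pt n → ℝ, MapsToI C ∧ Standardized C ∧
        KIncreasingOn k (cubeSet n) C ∧
        (∀ u : Pt n, inCube u → A u ≤ C u ∧ C u ≤ B u) ∧ y = C x}, A x ≤ y := by
      rintro y ⟨C', h1, h2, h3, h4, rfl⟩
      exact (h4 x hx).1
    exact le_antisymm (le_csInf ⟨A x, hmem⟩ hlb) (csInf_le ⟨A x, hlb⟩ hmem)
  · -- backward direction
    intro hii x hx
    -- nonemptiness of the family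
    have h1cube : inCube (fun _ : Fin n => (1:ℝ)) := by intro i; norm_num
    have h1 := hii (fun _ => 1) h1cube
    rw [hA.2.2] at h1
    have hSne : {y : ℝ | ∃ C : Pt n → ℝ, MapsToI C ∧ Standardized C ∧
        KIncreasingOn k (cubeSet n) C ∧
        (∀ u : Pt n, inCube u → A u ≤ C u ∧ C u ≤ B u) ∧
        y = C (fun _ => 1)}.Nonempty := by
      by_contra hemp
      rw [Set.not_nonempty_iff_eq_empty] at hemp
      rw [hemp, Real.sInf_empty] at h1
      norm_num at h1
    obtain ⟨y₀, C₀, hC₀I, hC₀S, hC₀K, hC₀sand, -⟩ := hSne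
    by_cases hzero : ∃ i, x i = 0
    · have hAx : A x = 0 := hA.1 x hx hzero
      have hBx : B x = 0 := hB.1 x hx hzero
      rw [hAx, hBx, sub_zero]
      exact Ppos_nonneg k A B hL x
    · push_neg at hzero
      have hpos : ∀ i, 0 < x i := fun i => lt_of_le_of_ne (hx i).1 (Ne.symm (hzero i))
      obtain ⟨DU₀, hDU₀, hm₀⟩ := exists_DU_pos k hkn x hx hpos
      rw [Ppos]
      apply le_csInf
      · exact ⟨Lk k A B DU₀ / |(multDU k DU₀ x : ℝ)|, DU₀, hDU₀,
          (by rw [hm₀]; norm_num), rfl⟩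
      · rintro r ⟨DU, hDU, hm, rfl⟩
        have hmpos : (0:ℝ) < (multDU k DU x : ℝ) := by exact_mod_cast hm
        rw [abs_of_pos hmpos, le_div_iff₀ hmpos]
        by_contra hcon
        push_neg at hcon
        -- hcon : Lk < (B x - A x) * m
        set m' : ℝ := (multDU k DU x : ℝ) with hm'def
        set ε : ℝ := ((B x - A x) * m' - Lk k A B DU) / m' with hεdef
        have hε_pos : 0 < ε := by
          rw [hεdef]
          apply div_pos _ hmpos
          linarith
        -- the sInf characterization at x
        have hAx := hii x hx
        have hSxne : {y : ℝ | ∃ C : Pt n → ℝ, MapsToI C ∧ Standardized C ∧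
            KIncreasingOn k (cubeSet n) C ∧
            (∀ u : Pt n, inCube u → A u ≤ C u ∧ C u ≤ B u) ∧ y = C x}.Nonempty :=
          ⟨C₀ x, C₀, hC₀I, hC₀S, hC₀K, hC₀sand, rfl⟩
        have hSxbdd : BddBelow {y : ℝ | ∃ C : Pt n → ℝ, MapsToI C ∧ Standardized C ∧
            KIncreasingOn k (cubeSet n) C ∧
            (∀ u : Pt n, inCube u → A u ≤ C u ∧ C u ≤ B u) ∧ y = C x} := by
          refine ⟨A x, ?_⟩
          rintro y ⟨C', h1, h2, h3, h4, rfl⟩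
          exact (h4 x hx).1
        have hlt : sInf {y : ℝ | ∃ C : Pt n → ℝ, MapsToI C ∧ Standardized C ∧
            KIncreasingOn k (cubeSet n) C ∧
            (∀ u : Pt n, inCube u → A u ≤ C u ∧ C u ≤ B u) ∧ y = C x} < A x + ε := by
          rw [← hAx]
          linarith
        obtain ⟨y, hymem, hylt⟩ := (csInf_lt_iff hSxbdd hSxne).mp hlt
        obtain ⟨C', hC'I, hC'S, hC'K, hC'sand, rfl⟩ := hymem
        have hkey2 := Lk_ge k A B C' (fun u hu => (hC'sand u hu).1)
          (fun u hu => (hC'sand u hu).2) hC'K DU hDU x hm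
        -- hkey2 : m' * (B x - C' x) ≤ Lk
        have h5 : B x - A x - ε < B x - C' x := by linarith
        have h6 : m' * (B x - A x - ε) < m' * (B x - C' x) :=
          mul_lt_mul_of_pos_left h5 hmpos
        have h8 : m' * ε = (B x - A x) * m' - Lk k A B DU := by
          rw [hεdef]
          field_simp
        nlinarith [hkey2, h6, h8]
end
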